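/- arXiv:2108.04638 — 8 statements merged into one kernel-verified Lean document; each statement's English description precedes it below -/
import Mathlib

section
/- Let d ≥ 2, let Λ be a unimodular lattice in ℝ^d, and let r ∈ (0, 1/4) be such that Λ contains no nonzero point of the open cube (r−1, 1−r)^d. Let 𝔘 be a Borel subset of ℝ^d that is disjoint from the union Λ + (½(r−1), ½(1−r))^d and is contained in some translate of the cube (0, 3/4)^d. Then the Lebesgue volume of 𝔘 is less than d·r. -/
open Set MeasureTheory Pointwise

/-- The lattice in `ℝ^d` generated by the columns of the matrix `g`. -/
def lat {d : ℕ} (g : Matrix (Fin d) (Fin d) ℝ) : Set (Fin d → ℝ) :=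
  {v | ∃ m : Fin d → ℤ, v = g.mulVec (fun i => (m i : ℝ))}

/-- Strict Bernoulli inequality for `d ≥ 2`. -/
lemma bernoulli_strict_aux {r : ℝ} (h0 : 0 < r) (h1 : r < 1) :
    ∀ d : ℕ, 2 ≤ d → 1 < (1 - r) ^ d + d * r := by
  intro d hd
  induction d, hd using Nat.le_induction with
  | base => push_cast; nlinarith
  | succ n hn ih =>
    have h2 : (1 - r) ^ n ≤ 1 := pow_le_one₀ (by linarith) (by linarith)
    have h3 : (0:ℝ) ≤ (1 - r) ^ n := pow_nonneg (by linarith) n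
    have h4 : (1 - r) ^ (n + 1) = (1 - r) ^ n * (1 - r) := pow_succ _ _
    push_cast
    push_cast at ih
    nlinarith

theorem volume_lt_of_disjoint_from_cube_tiling
    {d : ℕ} (hd : 2 ≤ d) (g : Matrix (Fin d) (Fin d) ℝ) (hg : g.det = 1)
    (r : ℝ) (hr : r ∈ Set.Ioo (0 : ℝ) (1/4))
    (hΛ : ∀ v ∈ lat g, (∀ i, v i ∈ Set.Ioo (r - 1) (1 - r)) → v = 0)
    (U : Set (Fin d → ℝ)) (hU : MeasurableSet U)
    (hdisj : ∀ x ∈ U, ∀ v ∈ lat g, ¬ (∀ i, x i - v i ∈ Set.Ioo ((r - 1)/2) ((1 - r)/2)))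
    (htrans : ∃ c : Fin d → ℝ, ∀ x ∈ U, ∀ i, x i - c i ∈ Set.Ioo (0 : ℝ) (3/4)) :
    volume U < ENNReal.ofReal (d * r) := by
  classical
  obtain ⟨hr0, hr4⟩ := hr
  obtain ⟨c, hc⟩ := htrans
  have hgdet : IsUnit g.det := by rw [hg]; exact isUnit_one
  have hInv : Invertible g := g.invertibleOfIsUnitDet hgdet
  set b : Module.Basis (Fin d) ℝ (Fin d → ℝ) :=
    (Pi.basisFun ℝ (Fin d)).map (g.toLinearEquiv' hInv) with hb
  have hbmul : ∀ v : Fin d → ℝ, (g.toLinearEquiv' hInv) v = g.mulVec v := by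
    intro v; show Matrix.toLin' g v = _; rw [Matrix.toLin'_apply]
  have hbsingle : ∀ i, b i = g.mulVec (Pi.single i 1) := by
    intro i; simp [hb, hbmul]
  set L : Submodule ℤ (Fin d → ℝ) := Submodule.span ℤ (Set.range b) with hL
  -- every lattice point is in the ℤ-span of the basis
  have hlat1 : ∀ x ∈ lat g, x ∈ L := by
    rintro x ⟨m, rfl⟩
    have hx : (fun i => (m i : ℝ)) = ∑ i : Fin d, (m i : ℝ) • (Pi.single i (1:ℝ) : Fin d → ℝ) := by
      ext j
      rw [Finset.sum_apply]
      simp [Pi.single_apply]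
    rw [hx]
    have hsum : g.mulVec (∑ i : Fin d, (m i : ℝ) • (Pi.single i (1:ℝ) : Fin d → ℝ))
        = ∑ i : Fin d, (m i : ℝ) • b i := by
      rw [← hbmul, map_sum]
      refine Finset.sum_congr rfl fun i _ => ?_
      rw [_root_.map_smul, hbmul, hbsingle]
    rw [hsum]
    refine Submodule.sum_mem _ fun i _ => ?_
    rw [Int.cast_smul_eq_zsmul]
    exact Submodule.smul_mem _ _ (Submodule.subset_span ⟨i, rfl⟩)
  -- conversely
  have hlat2 : ∀ x ∈ L, x ∈ lat g := by
    intro x hx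
    induction hx using Submodule.span_induction with
    | mem y hy =>
      obtain ⟨i, rfl⟩ := hy
      refine ⟨Pi.single i 1, ?_⟩
      have hcast : (fun j => (((Pi.single i (1:ℤ) : Fin d → ℤ)) j : ℝ))
          = (Pi.single i (1:ℝ) : Fin d → ℝ) := by
        ext j
        by_cases h : j = i <;> simp [Pi.single_apply, h]
      rw [hbsingle, hcast]
    | zero =>
      refine ⟨0, ?_⟩
      have hcast : (fun i => (((0 : Fin d → ℤ)) i : ℝ)) = (0 : Fin d → ℝ) := by
        ext j; simp
      rw [hcast, Matrix.mulVec_zero]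
    | add y z _ _ ihy ihz =>
      obtain ⟨my, hmy⟩ := ihy
      obtain ⟨mz, hmz⟩ := ihz
      refine ⟨my + mz, ?_⟩
      have hcast : (fun i => (((my + mz : Fin d → ℤ)) i : ℝ))
          = (fun i => ((my i : ℝ))) + fun i => ((mz i : ℝ)) := by
        ext j; push_cast; simp
      rw [hcast, Matrix.mulVec_add, hmy, hmz]
    | smul a y _ ihy =>
      obtain ⟨m, hm⟩ := ihy
      refine ⟨a • m, ?_⟩
      have h1 : (fun i => ((a • m) i : ℝ)) = (a:ℝ) • fun i => (m i : ℝ) := by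
        ext j; push_cast; simp
      rw [h1, Matrix.mulVec_smul, ← hm, Int.cast_smul_eq_zsmul]
  -- fundamental domain
  set F : Set (Fin d → ℝ) := ZSpan.fundamentalDomain b with hFdef
  have hF : IsAddFundamentalDomain L F volume := ZSpan.isAddFundamentalDomain b volume
  haveI : MeasurableVAdd L (Fin d → ℝ) := by
    refine { measurable_const_vadd := ?_, measurable_vadd_const := ?_ }
    · intro c
      have hc' : (fun x : Fin d → ℝ => c +ᵥ x) = fun x => (c : Fin d → ℝ) + x := rfl
      rw [hc']
      exact measurable_const.add measurable_id
    · intro x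
      have hc' : (fun c : L => c +ᵥ x) = fun c : L => (c : Fin d → ℝ) + x := rfl
      rw [hc']
      exact measurable_subtype_coe.add measurable_const
  haveI : VAddInvariantMeasure L (Fin d → ℝ) volume := by
    constructor
    intro c s hs
    have hc' : (fun x : Fin d → ℝ => c +ᵥ x) = fun x => (c : Fin d → ℝ) + x := rfl
    rw [hc']
    exact measure_preimage_add volume _ s
  have hFmeas : MeasurableSet F := ZSpan.fundamentalDomain_measurableSet b
  have hFvol : volume F = 1 := by
    rw [hFdef, ZSpan.volume_fundamentalDomain]
    have hof : (Matrix.of fun i => b i) = g.transpose := by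
      ext i j
      show b i j = g j i
      rw [hbsingle]
      simp [Matrix.mulVec_single]
    rw [hof, Matrix.det_transpose, hg]
    simp
  -- the small cube
  set Q : Set (Fin d → ℝ) := Set.pi Set.univ (fun _ : Fin d => Ioo ((r-1)/2) ((1-r)/2))
    with hQdef
  have hQmeas : MeasurableSet Q := MeasurableSet.univ_pi fun _ => measurableSet_Ioo
  have hQvol : volume Q = ENNReal.ofReal ((1 - r)^d) := by
    rw [hQdef, volume_pi_pi]
    have h1 : ∀ _i : Fin d, volume (Ioo ((r-1)/2) ((1-r)/2)) = ENNReal.ofReal (1 - r) := by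
      intro i
      rw [Real.volume_Ioo]
      congr 1; ring
    rw [Finset.prod_congr rfl fun i _ => h1 i, Finset.prod_const, Finset.card_univ,
      Fintype.card_fin, ← ENNReal.ofReal_pow (by linarith)]
  -- membership in translates
  have hmemv : ∀ (v x : Fin d → ℝ) (S : Set (Fin d → ℝ)), x ∈ v +ᵥ S ↔ x - v ∈ S := by
    intro v x S
    constructor
    · rintro ⟨y, hy, rfl⟩
      simpa [vadd_eq_add] using hy
    · intro h
      exact ⟨x - v, h, by simp [vadd_eq_add]⟩
  have hco : ∀ (v : L) (S : Set (Fin d → ℝ)), (v +ᵥ S) = ((v : Fin d → ℝ) +ᵥ S) :=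
    fun v S => rfl
  -- lattice elements differences
  have hdifflat : ∀ v w : L, ((w : Fin d → ℝ) - v) ∈ lat g :=
    fun v w => hlat2 _ (Submodule.sub_mem L w.2 v.2)
  -- pairwise disjointness of translates of U
  have hdU : Pairwise (Function.onFun Disjoint
      fun v : L => ((v : Fin d → ℝ) +ᵥ U) ∩ F) := by
    intro v w hvw
    refine Set.disjoint_left.mpr ?_
    rintro x ⟨hxv, -⟩ ⟨hxw, -⟩
    rw [hmemv] at hxv hxw
    have hio : ∀ i, ((w : Fin d → ℝ) - v) i ∈ Set.Ioo (r - 1) (1 - r) := by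
      intro i
      have h1 := hc _ hxv i
      have h2 := hc _ hxw i
      simp only [Pi.sub_apply, Set.mem_Ioo] at h1 h2 ⊢
      constructor <;> nlinarith
    have h0 := hΛ _ (hdifflat v w) hio
    have : (w : Fin d → ℝ) = v := sub_eq_zero.mp h0
    exact hvw (Subtype.ext this).symm
  -- pairwise disjointness of translates of Q
  have hdQ : Pairwise (Function.onFun Disjoint
      fun v : L => ((v : Fin d → ℝ) +ᵥ Q) ∩ F) := by
    intro v w hvw
    refine Set.disjoint_left.mpr ?_
    rintro x ⟨hxv, -⟩ ⟨hxw, -⟩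
    rw [hmemv] at hxv hxw
    have hio : ∀ i, ((w : Fin d → ℝ) - v) i ∈ Set.Ioo (r - 1) (1 - r) := by
      intro i
      have h1 := hxv i (Set.mem_univ i)
      have h2 := hxw i (Set.mem_univ i)
      simp only [Pi.sub_apply, Set.mem_Ioo] at h1 h2 ⊢
      constructor <;> nlinarith
    have h0 := hΛ _ (hdifflat v w) hio
    have : (w : Fin d → ℝ) = v := sub_eq_zero.mp h0
    exact hvw (Subtype.ext this).symm
  -- U-translates are disjoint from Q-translates
  have hdUQ : ∀ v w : L,
      Disjoint (((v : Fin d → ℝ) +ᵥ U) ∩ F) (((w : Fin d → ℝ) +ᵥ Q) ∩ F) := by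
    intro v w
    refine Set.disjoint_left.mpr ?_
    rintro x ⟨hxv, -⟩ ⟨hxw, -⟩
    rw [hmemv] at hxv hxw
    refine hdisj _ hxv ((w : Fin d → ℝ) - v) (hdifflat v w) fun i => ?_
    have h2 := hxw i (Set.mem_univ i)
    simp only [Pi.sub_apply, Set.mem_Ioo] at h2 ⊢
    constructor <;> nlinarith [h2.1, h2.2]
  -- measurability of translates
  have hmUv : ∀ v : L, MeasurableSet (((v : Fin d → ℝ) +ᵥ U) ∩ F) := by
    intro v
    have he : ((v : Fin d → ℝ) +ᵥ U) = (fun x => x - (v : Fin d → ℝ)) ⁻¹' U :=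
      Set.ext fun x => hmemv _ x U
    have hm : Measurable fun x : Fin d → ℝ => x - (v : Fin d → ℝ) :=
      measurable_id.sub measurable_const
    exact (he ▸ hm hU).inter hFmeas
  have hmQv : ∀ v : L, MeasurableSet (((v : Fin d → ℝ) +ᵥ Q) ∩ F) := by
    intro v
    have he : ((v : Fin d → ℝ) +ᵥ Q) = (fun x => x - (v : Fin d → ℝ)) ⁻¹' Q :=
      Set.ext fun x => hmemv _ x Q
    have hm : Measurable fun x : Fin d → ℝ => x - (v : Fin d → ℝ) :=
      measurable_id.sub measurable_const
    exact (he ▸ hm hQmeas).inter hFmeas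
  -- decomposition of measures
  set AU : Set (Fin d → ℝ) := ⋃ v : L, ((v : Fin d → ℝ) +ᵥ U) ∩ F with hAUdef
  set AQ : Set (Fin d → ℝ) := ⋃ v : L, ((v : Fin d → ℝ) +ᵥ Q) ∩ F with hAQdef
  have hUsum : volume U = volume AU := by
    rw [hAUdef, measure_iUnion hdU hmUv]
    simpa [hco] using hF.measure_eq_tsum U
  have hQsum : volume Q = volume AQ := by
    rw [hAQdef, measure_iUnion hdQ hmQv]
    simpa [hco] using hF.measure_eq_tsum Q
  have hAQmeas : MeasurableSet AQ := MeasurableSet.iUnion hmQv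
  have hdisjAB : Disjoint AU AQ := by
    rw [hAUdef, hAQdef, Set.disjoint_iUnion_left]
    intro v
    rw [Set.disjoint_iUnion_right]
    intro w
    exact hdUQ v w
  have hkey : volume U + volume Q ≤ 1 := by
    rw [hUsum, hQsum, ← measure_union hdisjAB hAQmeas, ← hFvol]
    refine measure_mono (Set.union_subset ?_ ?_) <;>
      exact Set.iUnion_subset fun v => Set.inter_subset_right
  -- conclude
  by_contra hcon
  push_neg at hcon
  have h1 : ENNReal.ofReal (d * r) + ENNReal.ofReal ((1 - r)^d) ≤ 1 := by
    calc ENNReal.ofReal (d * r) + ENNReal.ofReal ((1 - r)^d)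
        ≤ volume U + volume Q := by rw [hQvol]; exact add_le_add hcon le_rfl
      _ ≤ 1 := hkey
  rw [← ENNReal.ofReal_add (mul_nonneg (Nat.cast_nonneg d) hr0.le) (pow_nonneg (by linarith) d), ← ENNReal.ofReal_one] at h1
  have h2 := (ENNReal.ofReal_le_ofReal_iff (by norm_num)).mp h1
  have h3 := bernoulli_strict_aux hr0 (by linarith) d hd
  linarith
end

section
/- Let d ≥ 2, Λ a unimodular lattice in ℝ^d, and r ∈ (0,1/4) with Λ ∩ (r−1,1−r)^d = {0}. If F ⊂ ℝ^d is a fundamental domain for ℝ^d/Λ, then the Lebesgue measure of F \ (Λ + (½(r−1), ½(1−r))^d) equals 1 − (1−r)^d, which is less than d·r. -/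
open Set MeasureTheory Pointwise

theorem volume_fundamental_domain_minus_cubes
    {d : ℕ} (hd : 2 ≤ d) (g : Matrix (Fin d) (Fin d) ℝ) (hg : g.det = 1)
    (r : ℝ) (hr : r ∈ Set.Ioo (0 : ℝ) (1/4))
    (hΛ : ∀ v ∈ lat g, (∀ i, v i ∈ Set.Ioo (r - 1) (1 - r)) → v = 0)
    (F : Set (Fin d → ℝ)) (hF : MeasurableSet F)
    (hfund : ∀ x : Fin d → ℝ, ∃! v, v ∈ lat g ∧ x - v ∈ F) :
    volume (F \ {x | ∃ v ∈ lat g, ∀ i, x i - v i ∈ Set.Ioo ((r - 1)/2) ((1 - r)/2)})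
      = ENNReal.ofReal (1 - (1 - r) ^ d) ∧ 1 - (1 - r) ^ d < d * r := by
  obtain ⟨hr0, hr4⟩ := hr
  -- Bernoulli inequality part
  have hlt : 1 - (1 - r) ^ d < d * r := by
    have hber := one_add_mul_self_lt_rpow_one_add (s := -r) (by linarith) (by linarith)
      (p := (d : ℝ)) (by exact_mod_cast Nat.lt_of_lt_of_le Nat.one_lt_two hd)
    rw [Real.rpow_natCast] at hber
    have h1 : (1 : ℝ) + -r = 1 - r := by ring
    rw [h1] at hber
    nlinarith
  refine ⟨?_, hlt⟩
  -- Basis from the columns of g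
  have hinv : Invertible g := g.invertibleOfIsUnitDet (by rw [hg]; exact isUnit_one)
  let b : Module.Basis (Fin d) ℝ (Fin d → ℝ) := (Pi.basisFun ℝ (Fin d)).map (g.toLinearEquiv' hinv)
  have hbi : ∀ i, b i = g.mulVec (Pi.single i 1) := by
    intro i
    simp [b, Matrix.toLinearEquiv', Matrix.toLin'_apply]
  have hsum : ∀ m : Fin d → ℤ, g.mulVec (fun i => (m i : ℝ)) = ∑ i, m i • b i := by
    intro m
    have h1 : (fun i => (m i : ℝ)) = ∑ i, (m i : ℝ) • (Pi.single i (1:ℝ) : Fin d → ℝ) := by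
      ext j
      simp [Finset.sum_apply, Pi.single_apply]
    rw [h1]
    have h2 := map_sum (Matrix.mulVecLin g)
      (fun i : Fin d => (m i : ℝ) • (Pi.single i (1:ℝ) : Fin d → ℝ)) Finset.univ
    simp only [Matrix.mulVecLin_apply] at h2
    rw [h2]
    refine Finset.sum_congr rfl fun i _ => ?_
    rw [Matrix.mulVec_smul, hbi i, Int.cast_smul_eq_zsmul]
  set L : AddSubgroup (Fin d → ℝ) := (Submodule.span ℤ (Set.range ⇑b)).toAddSubgroup with hL
  have memL : ∀ x, x ∈ lat g ↔ x ∈ L := by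
    intro x
    rw [hL, Submodule.mem_toAddSubgroup]
    constructor
    · rintro ⟨m, rfl⟩
      rw [hsum m]
      exact Submodule.sum_mem _ fun i _ =>
        Submodule.smul_mem _ _ (Submodule.subset_span ⟨i, rfl⟩)
    · intro hx
      obtain ⟨c, hc⟩ := (Submodule.mem_span_range_iff_exists_fun ℤ).mp hx
      exact ⟨c, by rw [hsum c, hc]⟩
  -- F is a fundamental domain for L
  have hFfund : IsAddFundamentalDomain L F volume := by
    refine IsAddFundamentalDomain.mk' hF.nullMeasurableSet (fun x => ?_)
    obtain ⟨v, ⟨hv, hvF⟩, huniq⟩ := hfund x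
    refine ⟨⟨-v, neg_mem ((memL v).mp hv)⟩, ?_, ?_⟩
    · show -v +ᵥ x ∈ F
      simpa [vadd_eq_add, neg_add_eq_sub] using hvF
    · rintro ⟨w, hw⟩ hwx
      have hw' : -w ∈ lat g := (memL _).mpr (neg_mem hw)
      have hwF : x - -w ∈ F := by
        simpa [sub_neg_eq_add, add_comm] using hwx
      have : -w = v := huniq (-w) ⟨hw', hwF⟩
      ext
      simp [← this]
  -- countability of L
  have hcnt : Countable L := by
    have h1 : (lat g).Countable := by
      have : lat g = Set.range (fun m : Fin d → ℤ => g.mulVec (fun i => (m i : ℝ))) := by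
        ext x; simp [lat, eq_comm]
      rw [this]
      exact Set.countable_range _
    have h2 : ((L : Set (Fin d → ℝ))).Countable := by
      have : (L : Set (Fin d → ℝ)) = lat g := by
        ext x; exact (memL x).symm
      rw [this]; exact h1
    exact h2.to_subtype
  -- volume F = 1
  have hvolF : volume F = 1 := by
    have h1 := (ZSpan.isAddFundamentalDomain' b volume).measure_eq hFfund
    rw [ZSpan.volume_fundamentalDomain] at h1
    have hMb : (Matrix.of ⇑b) = g.transpose := by
      ext i j
      simp [hbi, Matrix.mulVec_single]
    rw [hMb, Matrix.det_transpose, hg] at h1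
    simpa using h1.symm
  -- the cube and its translates
  set Q : Set (Fin d → ℝ) := Set.pi univ (fun _ => Ioo ((r-1)/2) ((1-r)/2)) with hQdef
  have hQm : MeasurableSet Q := MeasurableSet.univ_pi fun _ => measurableSet_Ioo
  have hvolQ : volume Q = ENNReal.ofReal ((1 - r) ^ d) := by
    rw [hQdef, volume_pi_pi]
    have h1 : ∀ i : Fin d, volume (Ioo ((r-1)/2) ((1-r)/2)) = ENNReal.ofReal (1 - r) := by
      intro i
      rw [Real.volume_Ioo]
      congr 1
      ring
    rw [Finset.prod_congr rfl fun i _ => h1 i, Finset.prod_const,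
      ← ENNReal.ofReal_pow (by linarith), Finset.card_univ, Fintype.card_fin]
  set U : Set (Fin d → ℝ) :=
    {x | ∃ v ∈ lat g, ∀ i, x i - v i ∈ Set.Ioo ((r - 1)/2) ((1 - r)/2)} with hUdef
  have hmemQ : ∀ (v x : Fin d → ℝ), x ∈ v +ᵥ Q ↔ ∀ i, x i - v i ∈ Ioo ((r-1)/2) ((1-r)/2) := by
    intro v x
    rw [Set.mem_vadd_set_iff_neg_vadd_mem]
    constructor
    · intro h i
      have := h i (mem_univ i)
      simpa [neg_add_eq_sub] using this
    · intro h i _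
      simpa [neg_add_eq_sub] using h i
  have hUeq : U = ⋃ v : L, ((v : Fin d → ℝ) +ᵥ Q) := by
    ext x
    simp only [hUdef, mem_setOf_eq, mem_iUnion]
    constructor
    · rintro ⟨v, hv, h⟩
      exact ⟨⟨v, (memL v).mp hv⟩, (hmemQ v x).mpr h⟩
    · rintro ⟨v, hv⟩
      exact ⟨v, (memL _).mpr v.2, (hmemQ _ x).mp hv⟩
  -- disjointness of the translated cubes
  have hdisj : Pairwise (Function.onFun Disjoint fun v : L => ((v : Fin d → ℝ) +ᵥ Q) ∩ F) := by
    intro v w hvw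
    refine Set.disjoint_left.mpr ?_
    rintro x ⟨hxv, -⟩ ⟨hxw, -⟩
    have h1 := (hmemQ _ x).mp hxv
    have h2 := (hmemQ _ x).mp hxw
    have hmem : ((w : Fin d → ℝ) - v) ∈ lat g :=
      (memL _).mpr (sub_mem w.2 v.2)
    have hzero : ((w : Fin d → ℝ) - v) = 0 := by
      refine hΛ _ hmem fun i => ?_
      have ha := h1 i
      have hb := h2 i
      simp only [mem_Ioo, Pi.sub_apply] at ha hb ⊢
      constructor <;> linarith [ha.1, ha.2, hb.1, hb.2]
    exact hvw (Subtype.ext (by simpa [sub_eq_zero, eq_comm] using hzero))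
  -- measure of F ∩ U
  have hvadd_eq : ∀ v : L, (v +ᵥ Q : Set (Fin d → ℝ)) = ((v : Fin d → ℝ) +ᵥ Q) := fun v => rfl
  have hFU : volume (F ∩ U) = volume Q := by
    rw [hUeq, Set.inter_iUnion]
    have hmeas : ∀ v : L, MeasurableSet (F ∩ ((v : Fin d → ℝ) +ᵥ Q)) := fun v =>
      hF.inter (hQm.const_vadd _)
    have hd2 : Pairwise (Function.onFun Disjoint fun v : L => F ∩ ((v : Fin d → ℝ) +ᵥ Q)) := by
      intro v w hvw
      have := hdisj hvw
      simpa [Function.onFun, Set.inter_comm] using this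
    rw [measure_iUnion hd2 hmeas]
    have htsum := hFfund.measure_eq_tsum Q
    rw [htsum]
    congr 1
    ext v
    rw [hvadd_eq, Set.inter_comm]
  -- final computation
  have hUm : MeasurableSet U := by
    rw [hUeq]
    exact MeasurableSet.iUnion fun v => hQm.const_vadd _
  have hfin : volume (F ∩ U) ≠ ⊤ := by
    rw [hFU, hvolQ]; exact ENNReal.ofReal_ne_top
  have key : volume (F \ U) = 1 - ENNReal.ofReal ((1 - r) ^ d) := by
    rw [← Set.diff_self_inter, measure_diff inter_subset_left
      (hF.inter hUm).nullMeasurableSet hfin, hvolF, hFU, hvolQ]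
  rw [key, ← ENNReal.ofReal_one, ← ENNReal.ofReal_sub _ (pow_nonneg (by linarith) d)]
end

section
/- Let d ≥ 2 and let g = (g_{ij}) ∈ SL_d(ℝ) and r ∈ (0, 1/8). Assume that g·ℤ^d contains no nonzero points of the open cube (r−1, 1−r)^d, and that ‖g − u‖ < 1/8 (supremum norm on matrix entries) for some upper triangular unipotent matrix u with all strictly-upper-triangular entries in (−1/2, 1/2]. Then for every 1 ≤ i ≤ d one has 1 − r ≤ g_{ii} ≤ 1 − r + 8^{d−1}·d·r. -/
open Set MeasureTheory

theorem diagonal_entries_bound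
    {d : ℕ} (hd : 2 ≤ d) (g u : Matrix (Fin d) (Fin d) ℝ) (hg : g.det = 1)
    (r : ℝ) (hr : r ∈ Set.Ioo (0 : ℝ) (1/8))
    (hlat : ∀ v ∈ lat g, (∀ i, v i ∈ Set.Ioo (r - 1) (1 - r)) → v = 0)
    (hu1 : ∀ i, u i i = 1)
    (hu0 : ∀ i j : Fin d, j < i → u i j = 0)
    (hu2 : ∀ i j : Fin d, i < j → u i j ∈ Set.Ioc (-(1/2) : ℝ) (1/2))
    (hnear : ∀ i j, |g i j - u i j| < 1/8) :
    ∀ i, 1 - r ≤ g i i ∧ g i i ≤ 1 - r + 8 ^ (d - 1) * d * r := by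
  classical
  obtain ⟨hr0, hr8⟩ := hr
  -- entry bounds
  have hdiag : ∀ j : Fin d, 7/8 < g j j ∧ g j j < 9/8 := by
    intro j
    have h := abs_lt.mp (hnear j j)
    rw [hu1 j] at h
    exact ⟨by linarith [h.1], by linarith [h.2]⟩
  have hoff : ∀ j k : Fin d, j ≠ k → -(5/8) < g j k ∧ g j k < 5/8 := by
    intro j k hjk
    have h := abs_lt.mp (hnear j k)
    rcases lt_or_gt_of_ne hjk with hlt | hgt
    · have h2 := hu2 j k hlt
      exact ⟨by linarith [h.1, h2.1], by linarith [h.2, h2.2]⟩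
    · rw [hu0 j k hgt] at h
      exact ⟨by linarith [h.1], by linarith [h.2]⟩
  -- lattice facts
  have hsub : ∀ v w : Fin d → ℝ, v ∈ lat g → w ∈ lat g → v - w ∈ lat g := by
    rintro _ _ ⟨m, rfl⟩ ⟨m', rfl⟩
    refine ⟨m - m', ?_⟩
    have hc : (fun i => ((m - m') i : ℝ)) = (fun i => (m i : ℝ)) - (fun i => (m' i : ℝ)) := by
      funext i; simp
    rw [hc, Matrix.mulVec_sub]
  have hzero : (0 : Fin d → ℝ) ∈ lat g := by
    refine ⟨0, ?_⟩
    have hc : (fun i => (((0 : Fin d → ℤ) i : ℝ))) = (0 : Fin d → ℝ) := by funext i; simp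
    rw [hc, Matrix.mulVec_zero]
  have hcol : ∀ i : Fin d, (fun k => g k i) ∈ lat g := by
    intro i
    refine ⟨fun j => if j = i then 1 else 0, ?_⟩
    have hc : (fun j => ((if j = i then (1:ℤ) else 0 : ℤ) : ℝ)) = Pi.single i (1:ℝ) := by
      funext j; by_cases hji : j = i <;> simp [hji, Pi.single_apply]
    rw [hc, Matrix.mulVec_single]
    funext k; simp
  -- lower bound
  have hlow : ∀ j : Fin d, 1 - r ≤ g j j := by
    intro j
    by_contra hcon
    push_neg at hcon
    have hz := hlat _ (hcol j) ?_
    · have := congrFun hz j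
      simp only [Pi.zero_apply] at this
      linarith [(hdiag j).1]
    intro k
    by_cases hkj : k = j
    · subst hkj
      exact ⟨by linarith [(hdiag k).1], hcon⟩
    · obtain ⟨h1, h2⟩ := hoff k j hkj
      exact ⟨by linarith, by linarith⟩
  intro i
  refine ⟨hlow i, ?_⟩
  by_contra hbig
  push_neg at hbig
  have hdpos : (0:ℝ) < (d:ℝ) := by
    have : (2:ℝ) ≤ (d:ℝ) := by exact_mod_cast hd
    linarith
  have hpow8 : (0:ℝ) < (8:ℝ) ^ (d-1) := by positivity
  have hγpos : 0 < g i i - (1 - r) := by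
    have hpos : (0:ℝ) < 8 ^ (d-1) * (d:ℝ) * r := mul_pos (mul_pos hpow8 hdpos) hr0
    linarith
  -- the shift vector
  set c : Fin d → ℝ := fun j => max (g j i) 0 with hc_def
  have hc0 : ∀ j, 0 ≤ c j := fun j => le_max_right _ _
  have hcg : ∀ j, g j i ≤ c j := fun j => le_max_left _ _
  have hcub : ∀ j, j ≠ i → c j < 5/8 := by
    intro j hj
    exact max_lt (hoff j i hj).2 (by norm_num)
  have hcsub : ∀ j, j ≠ i → c j - g j i < 5/8 := by
    intro j hj
    rcases le_total (g j i) 0 with h | h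
    · rw [hc_def]
      simp only [max_eq_right h]
      linarith [(hoff j i hj).1]
    · rw [hc_def]
      simp only [max_eq_left h]
      norm_num
  -- key lemma : no lattice point in S - Q
  have hkey : ∀ v ∈ lat g, 0 < v i → v i < g i i →
      (∀ j, j ≠ i → c j - (1 - r) < v j ∧ v j < c j + 1/8) → False := by
    intro v hv hv0 hvlt hvj
    by_cases hcase : v i < 1 - r
    · have hz := hlat v hv ?_
      · rw [hz] at hv0
        simp at hv0
      intro j
      by_cases hji : j = i
      · subst hji
        exact ⟨by linarith, hcase⟩
      · obtain ⟨h1, h2⟩ := hvj j hji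
        have := hc0 j
        have := hcub j hji
        exact ⟨by linarith, by linarith⟩
    · push_neg at hcase
      have hw : v - (fun k => g k i) ∈ lat g := hsub _ _ hv (hcol i)
      have hz := hlat _ hw ?_
      · have := congrFun hz i
        simp only [Pi.sub_apply, Pi.zero_apply] at this
        linarith
      intro j
      by_cases hji : j = i
      · subst hji
        simp only [Pi.sub_apply]
        constructor
        · linarith [(hdiag j).2]
        · linarith
      · obtain ⟨h1, h2⟩ := hvj j hji
        have h3 := hcg j
        have h4 := hcsub j hji
        simp only [Pi.sub_apply]
        exact ⟨by linarith, by linarith⟩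
  -- basis from g
  have hdet1 : IsUnit g.det := by rw [hg]; exact isUnit_one
  have hinv : Invertible g := g.invertibleOfIsUnitDet hdet1
  let e : (Fin d → ℝ) ≃ₗ[ℝ] (Fin d → ℝ) := g.toLinearEquiv' hinv
  let b : Module.Basis (Fin d) ℝ (Fin d → ℝ) := (Pi.basisFun ℝ (Fin d)).map e
  have hbj : ∀ j, b j = fun k => g k j := by
    intro j
    have h1 : b j = e ((Pi.basisFun ℝ (Fin d)) j) := Module.Basis.map_apply _ _ _
    rw [h1, Pi.basisFun_apply]
    have h2 : e (Pi.single j 1) = Matrix.toLin' g (Pi.single j 1) := rfl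
    rw [h2, Matrix.toLin'_apply, Matrix.mulVec_single]
    funext k; simp
  have hLlat : ∀ z ∈ Submodule.span ℤ (Set.range ⇑b), z ∈ lat g := by
    intro z hz
    obtain ⟨m, hm⟩ := (Submodule.mem_span_range_iff_exists_fun ℤ).mp hz
    refine ⟨m, ?_⟩
    rw [← hm]
    funext k
    simp only [Finset.sum_apply, Pi.smul_apply, hbj, Matrix.mulVec, dotProduct]
    exact Finset.sum_congr rfl fun j _ => by rw [zsmul_eq_mul, mul_comm]
  -- the sets
  set Qs : Set (Fin d → ℝ) := univ.pi fun _ => Ico (0:ℝ) (1-r) with hQs_def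
  set Ss : Set (Fin d → ℝ) :=
    univ.pi fun j => if j = i then Ioo (1-r) (g i i) else Ioo (c j) (c j + 1/8) with hSs_def
  have hQmeas : MeasurableSet Qs := MeasurableSet.univ_pi fun _ => measurableSet_Ico
  have hSmeas : MeasurableSet Ss := by
    refine MeasurableSet.univ_pi fun j => ?_
    split <;> exact measurableSet_Ioo
  have hdisj : Disjoint Qs Ss := by
    rw [Set.disjoint_left]
    intro x hxQ hxS
    have h1 := hxQ i (mem_univ i)
    have h2 : x i ∈ Ioo (1-r) (g i i) := by simpa using hxS i (mem_univ i)
    simp only [mem_Ico] at h1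
    simp only [mem_Ioo] at h2
    linarith [h1.2, h2.1]
  have hvolQ : volume Qs = ENNReal.ofReal ((1-r)^d) := by
    rw [hQs_def, volume_pi_pi]
    simp only [Real.volume_Ico, sub_zero]
    rw [Finset.prod_const, Finset.card_univ, Fintype.card_fin,
      ← ENNReal.ofReal_pow (by linarith)]
  have hvolS : volume Ss = ENNReal.ofReal ((g i i - (1-r)) * (1/8)^(d-1)) := by
    rw [hSs_def, volume_pi_pi]
    have hterm : ∀ j : Fin d,
        volume (if j = i then Ioo (1-r) (g i i) else Ioo (c j) (c j + 1/8)) =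
        if j = i then ENNReal.ofReal (g i i - (1-r)) else ENNReal.ofReal (1/8) := by
      intro j
      split <;> simp [Real.volume_Ioo]
    rw [Finset.prod_congr rfl fun j _ => hterm j]
    rw [← Finset.mul_prod_erase Finset.univ _ (Finset.mem_univ i), if_pos rfl]
    rw [Finset.prod_congr rfl (fun j hj => if_neg (Finset.ne_of_mem_erase hj))]
    rw [Finset.prod_const, Finset.card_erase_of_mem (Finset.mem_univ i),
      Finset.card_univ, Fintype.card_fin]
    rw [← ENNReal.ofReal_pow (by norm_num), ← ENNReal.ofReal_mul (le_of_lt hγpos)]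
  set A : Set (Fin d → ℝ) := Qs ∪ Ss with hA_def
  have hAmeas : MeasurableSet A := hQmeas.union hSmeas
  have hvolA : volume A = ENNReal.ofReal ((1-r)^d + (g i i - (1-r)) * (1/8)^(d-1)) := by
    rw [hA_def, measure_union hdisj hSmeas, hvolQ, hvolS, ← ENNReal.ofReal_add]
    · exact pow_nonneg (by linarith) d
    · exact mul_nonneg (le_of_lt hγpos) (by positivity)
  -- covolume is 1
  have hFvol : volume (ZSpan.fundamentalDomain b) = 1 := by
    rw [ZSpan.volume_fundamentalDomain]
    have hM : (Matrix.of ⇑b) = g.transpose := by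
      ext j k
      have := congrFun (hbj j) k
      simpa [Matrix.transpose_apply] using this
    rw [hM, Matrix.det_transpose, hg]
    simp
  -- volume inequality
  have hreal : (1:ℝ) < (1-r)^d + (g i i - (1-r)) * (1/8)^(d-1) := by
    have hb : (1:ℝ) - d*r ≤ (1-r)^d := by
      have h := one_add_mul_le_pow (a := -r) (by linarith : (-2:ℝ) ≤ -r) d
      calc (1:ℝ) - d*r = 1 + d*(-r) := by ring
        _ ≤ (1 + -r)^d := h
        _ = (1-r)^d := by rw [show (1:ℝ) + -r = 1 - r by ring]
    have hpowp : (0:ℝ) < ((1:ℝ)/8)^(d-1) := by positivity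
    have h88 : (8:ℝ)^(d-1) * ((1:ℝ)/8)^(d-1) = 1 := by
      rw [← mul_pow]; norm_num
    have hγ : (8:ℝ)^(d-1)*(d:ℝ)*r < g i i - (1-r) := by linarith
    have h2 : (d:ℝ)*r < (g i i - (1-r)) * (1/8)^(d-1) := by
      have := mul_lt_mul_of_pos_right hγ hpowp
      nlinarith
    linarith
  have hlt : volume (ZSpan.fundamentalDomain b) < volume A := by
    rw [hFvol, hvolA, ← ENNReal.ofReal_one]
    rw [ENNReal.ofReal_lt_ofReal_iff (by linarith)]
    exact hreal
  -- Blichfeldt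
  haveI : Countable (Submodule.span ℤ (Set.range ⇑b)).toAddSubgroup :=
    (inferInstance : Countable (Submodule.span ℤ (Set.range ⇑b)))
  obtain ⟨x, y, hxy, hndis⟩ :=
    exists_pair_mem_lattice_not_disjoint_vadd (ZSpan.isAddFundamentalDomain' b volume)
      hAmeas.nullMeasurableSet hlt
  obtain ⟨z, hz1, hz2⟩ := Set.not_disjoint_iff.mp hndis
  obtain ⟨p, hp, hpz⟩ := hz1
  obtain ⟨q, hq, hqz⟩ := hz2
  have hxpq : (x : Fin d → ℝ) + p = (y : Fin d → ℝ) + q := by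
    have h1 : (x : Fin d → ℝ) + p = z := hpz
    have h2 : (y : Fin d → ℝ) + q = z := hqz
    rw [h1, h2]
  have hqp : q - p = ((x : Fin d → ℝ) - (y : Fin d → ℝ)) := by
    rw [sub_eq_sub_iff_add_eq_add, add_comm q ((y : Fin d → ℝ))]
    exact hxpq.symm
  have hvL : q - p ∈ lat g := by
    rw [hqp]
    have : ((x : Fin d → ℝ) - (y : Fin d → ℝ)) = ((x - y : _) : Fin d → ℝ) := by
      push_cast
      rfl
    rw [this]
    exact hLlat _ (SetLike.coe_mem _)
  have hvne : q - p ≠ 0 := by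
    rw [hqp]
    intro hc
    apply hxy
    have : (x : Fin d → ℝ) = (y : Fin d → ℝ) := by
      have := sub_eq_zero.mp hc
      exact this
    exact Subtype.coe_injective this
  -- case analysis
  have hQmem : ∀ w : Fin d → ℝ, w ∈ Qs → ∀ j, 0 ≤ w j ∧ w j < 1 - r := by
    intro w hw j
    have := hw j (mem_univ j)
    simpa [mem_Ico] using this
  have hSmemi : ∀ w : Fin d → ℝ, w ∈ Ss → 1 - r < w i ∧ w i < g i i := by
    intro w hw
    have := hw i (mem_univ i)
    simp only [if_pos rfl, mem_Ioo] at this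
    exact this
  have hSmemj : ∀ w : Fin d → ℝ, w ∈ Ss → ∀ j, j ≠ i → c j < w j ∧ w j < c j + 1/8 := by
    intro w hw j hj
    have := hw j (mem_univ j)
    simp only [if_neg hj, mem_Ioo] at this
    exact this
  rcases hp with hpQ | hpS <;> rcases hq with hqQ | hqS
  · -- both in Q
    apply hvne
    apply hlat _ hvL
    intro j
    obtain ⟨hp1, hp2⟩ := hQmem p hpQ j
    obtain ⟨hq1, hq2⟩ := hQmem q hqQ j
    simp only [Pi.sub_apply, mem_Ioo]
    exact ⟨by linarith, by linarith⟩
  · -- p ∈ Q, q ∈ S : q - p ∈ S - Q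
    refine hkey (q - p) hvL ?_ ?_ ?_
    · obtain ⟨h1, _⟩ := hSmemi q hqS
      obtain ⟨_, h2⟩ := hQmem p hpQ i
      simp only [Pi.sub_apply]
      linarith
    · obtain ⟨_, h1⟩ := hSmemi q hqS
      obtain ⟨h2, _⟩ := hQmem p hpQ i
      simp only [Pi.sub_apply]
      linarith
    · intro j hj
      obtain ⟨h1, h2⟩ := hSmemj q hqS j hj
      obtain ⟨h3, h4⟩ := hQmem p hpQ j
      simp only [Pi.sub_apply]
      exact ⟨by linarith, by linarith⟩
  · -- p ∈ S, q ∈ Q : p - q ∈ S - Q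
    have hnegv : p - q ∈ lat g := by
      have h0 : (0 : Fin d → ℝ) - (q - p) ∈ lat g := hsub _ _ hzero hvL
      have : (0 : Fin d → ℝ) - (q - p) = p - q := by abel
      rwa [this] at h0
    refine hkey (p - q) hnegv ?_ ?_ ?_
    · obtain ⟨h1, _⟩ := hSmemi p hpS
      obtain ⟨_, h2⟩ := hQmem q hqQ i
      simp only [Pi.sub_apply]
      linarith
    · obtain ⟨_, h1⟩ := hSmemi p hpS
      obtain ⟨h2, _⟩ := hQmem q hqQ i
      simp only [Pi.sub_apply]
      linarith
    · intro j hj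
      obtain ⟨h1, h2⟩ := hSmemj p hpS j hj
      obtain ⟨h3, h4⟩ := hQmem q hqQ j
      simp only [Pi.sub_apply]
      exact ⟨by linarith, by linarith⟩
  · -- both in S
    apply hvne
    apply hlat _ hvL
    intro j
    simp only [Pi.sub_apply, mem_Ioo]
    by_cases hj : j = i
    · subst hj
      obtain ⟨h1, h2⟩ := hSmemi p hpS
      obtain ⟨h3, h4⟩ := hSmemi q hqS
      have h5 := (hdiag j).2
      exact ⟨by linarith, by linarith⟩
    · obtain ⟨h1, h2⟩ := hSmemj p hpS j hj
      obtain ⟨h3, h4⟩ := hSmemj q hqS j hj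
      exact ⟨by linarith, by linarith⟩
end

section
/- Let d ≥ 2. There exist constants a ∈ (0,1) and A > 1 depending only on d such that: for every upper triangular unipotent matrix u ∈ SL_d(ℝ) and every ε ∈ (0, a), there exist an upper triangular unipotent integer matrix γ ∈ SL_d(ℤ) and a real number B ∈ [1, A] such that all strictly-upper-triangular entries of u·γ lie in the interval (−1/2 + 4Bε, 1/2 + Bε]. Moreover one can take A = 4^{2^d} and a = 2^{−(3+2^{d+1})}. -/
open Set

open Finset in

lemma single_entry (ε : ℝ) (hε : 0 < ε) (M : ℕ) (hM : (4:ℝ)^(M+1) * ε ≤ 1/2) (x : ℝ) :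
    ∃ (n0 : ℤ) (b : ℕ) (n : ℕ → ℤ), (∀ m, n m = n0 ∨ n m = n0 + 1) ∧
      ∀ m ≤ M, m ≠ b → x + n m ∈ Set.Ioc (-(1/2) + 4 * 4^m * ε) (1/2 + 4^m * ε) := by
  set n0 : ℤ := -⌈x - 1/2⌉ with hn0
  set r0 : ℝ := x + n0 with hr0
  have hr1 : -(1/2) < r0 := by
    have := Int.ceil_lt_add_one (x - 1/2)
    simp only [hr0, hn0]
    push_cast
    linarith
  have hr2 : r0 ≤ 1/2 := by
    have := Int.le_ceil (x - 1/2)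
    simp only [hr0, hn0]
    push_cast
    linarith
  set bad : ℕ → Prop := fun m => -(1/2) + 4^m * ε < r0 ∧ r0 ≤ -(1/2) + 4 * 4^m * ε with hbad
  have uniq : ∀ m1 m2, bad m1 → bad m2 → m1 = m2 := by
    have key : ∀ m1 m2, m1 < m2 → bad m1 → bad m2 → False := by
      intro m1 m2 hlt h1 h2
      have h4 : (4:ℝ) * 4^m1 ≤ 4^m2 := by
        rw [show (4:ℝ) * 4^m1 = 4^(m1+1) by ring]
        exact pow_le_pow_right₀ (by norm_num) hlt
      have := h1.2
      have := h2.1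
      nlinarith
    intro m1 m2 h1 h2
    rcases lt_trichotomy m1 m2 with h | h | h
    · exact absurd (key m1 m2 h h1 h2) (not_false)
    · exact h
    · exact absurd (key m2 m1 h h2 h1) (not_false)
  classical
  refine ⟨n0, if hb : ∃ m, bad m then hb.choose else 0,
    fun m => if r0 ≤ -(1/2) + 4 * 4^m * ε then n0 + 1 else n0, fun m => by
      simp only []
      by_cases h : r0 ≤ -(1/2) + 4 * 4^m * ε
      · rw [if_pos h]; right; rfl
      · rw [if_neg h]; left; rfl, ?_⟩
  intro m hm hmb
  have hsm : (4:ℝ) * 4^m * ε ≤ 1/2 := by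
    have h4 : (4:ℝ) * 4^m ≤ 4^(M+1) := by
      rw [show (4:ℝ) * 4^m = 4^(m+1) by ring]
      exact pow_le_pow_right₀ (by norm_num) (by omega)
    nlinarith
  have hsε : (0:ℝ) < 4^m * ε := by positivity
  by_cases h : r0 ≤ -(1/2) + 4 * 4^m * ε
  · simp only [if_pos h]
    push_cast
    have hnotbad : ¬ bad m := by
      intro hb
      have hex : ∃ m, bad m := ⟨m, hb⟩
      rw [dif_pos hex] at hmb
      exact hmb (uniq m hex.choose hb hex.choose_spec)
    have : ¬ (-(1/2) + 4^m * ε < r0) := fun hc => hnotbad ⟨hc, h⟩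
    push_neg at this
    constructor
    · have : x + ((n0:ℝ) + 1) = r0 + 1 := by rw [hr0]; ring
      rw [this]; linarith
    · have : x + ((n0:ℝ) + 1) = r0 + 1 := by rw [hr0]; ring
      rw [this]; linarith
  · simp only [if_neg h]
    push_neg at h
    constructor
    · rw [← hr0]; linarith
    · rw [← hr0]; linarith

open Finset in
lemma column_reduce (ε : ℝ) (hε : 0 < ε) (M : ℕ) (hM : (4:ℝ)^(M+1) * ε ≤ 1/2)
    (w : ℕ → ℕ → ℝ) (h : ℕ) :
    ∀ (x : ℕ → ℝ) (S : Finset ℕ), (∀ m ∈ S, m ≤ M) →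
    ∃ T ⊆ S, S.card ≤ T.card + (2^h - 1) ∧ ∀ m ∈ T, ∃ g : ℕ → ℤ,
      ∀ i < h, x i + g i + (∑ k ∈ Finset.Ico (i+1) h, w i k * g k) ∈
        Set.Ioc (-(1/2) + 4 * 4^m * ε) (1/2 + 4^m * ε) := by
  induction h with
  | zero =>
    intro x S hS
    exact ⟨S, Finset.Subset.refl S, by simp, fun m _ => ⟨0, fun i hi => absurd hi (by omega)⟩⟩
  | succ h IH =>
    intro x S hS
    classical
    obtain ⟨n0, b, n, hn2, hgood⟩ := single_entry ε hε M hM (x h)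
    have key : ∀ (c : ℤ) (S₀ : Finset ℕ), S₀ ⊆ S.erase b → (∀ m ∈ S₀, n m = c) →
        ∃ T ⊆ S₀, S₀.card ≤ T.card + (2^h - 1) ∧ ∀ m ∈ T, ∃ g : ℕ → ℤ,
          ∀ i < h + 1, x i + g i + (∑ k ∈ Finset.Ico (i+1) (h+1), w i k * g k) ∈
            Set.Ioc (-(1/2) + 4 * 4^m * ε) (1/2 + 4^m * ε) := by
      intro c S₀ hsub hc
      obtain ⟨T, hTsub, hTcard, hT⟩ := IH (fun i => x i + w i h * c) S₀
        (fun m hm => hS m (Finset.mem_of_mem_erase (hsub hm)))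
      refine ⟨T, hTsub, hTcard, ?_⟩
      intro m hm
      obtain ⟨g', hg'⟩ := hT m hm
      have hmS₀ := hTsub hm
      have hmM : m ≤ M := hS m (Finset.mem_of_mem_erase (hsub hmS₀))
      have hmb : m ≠ b := Finset.ne_of_mem_erase (hsub hmS₀)
      refine ⟨fun k => if k = h then c else g' k, ?_⟩
      intro i hi
      rcases Nat.lt_succ_iff_lt_or_eq.mp hi with hi' | rfl
      · have hsplit : ∑ k ∈ Finset.Ico (i+1) (h+1),
            w i k * ((if k = h then c else g' k : ℤ) : ℝ)
            = (∑ k ∈ Finset.Ico (i+1) h, w i k * (g' k : ℝ)) + w i h * (c : ℝ) := by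
          rw [Finset.sum_Ico_succ_top (by omega : i + 1 ≤ h)]
          rw [if_pos rfl]
          congr 1
          refine Finset.sum_congr rfl (fun k hk => ?_)
          rw [if_neg (by exact Nat.ne_of_lt (Finset.mem_Ico.mp hk).2)]
        have hgi : ((if i = h then c else g' i : ℤ) : ℝ) = (g' i : ℝ) := by
          rw [if_neg (by omega)]
        rw [hsplit, hgi]
        have hmem := hg' i hi'
        simp only [Set.mem_Ioc] at hmem ⊢
        constructor
        · linarith [hmem.1]
        · linarith [hmem.2]
      · have hempty : Finset.Ico (i+1) (i+1) = ∅ := Finset.Ico_self _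
        have hval : (fun k => if k = i then c else g' k) i = c := by simp
        rw [hempty, Finset.sum_empty, hval]
        have := hgood m hmM hmb
        rw [hc m hmS₀] at this
        simpa using this
    set S1 : Finset ℕ := (S.erase b).filter (fun m => n m = n0) with hS1
    set S2 : Finset ℕ := (S.erase b).filter (fun m => ¬ n m = n0) with hS2
    obtain ⟨T1, hT1sub, hT1card, hT1⟩ := key n0 S1 (Finset.filter_subset _ _)
      (fun m hm => (Finset.mem_filter.mp hm).2)
    obtain ⟨T2, hT2sub, hT2card, hT2⟩ := key (n0+1) S2 (Finset.filter_subset _ _)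
      (fun m hm => by
        have := (Finset.mem_filter.mp hm).2
        rcases hn2 m with h' | h'
        · exact absurd h' this
        · exact h')
    refine ⟨T1 ∪ T2, ?_, ?_, ?_⟩
    · intro m hm
      rcases Finset.mem_union.mp hm with h' | h'
      · exact Finset.mem_of_mem_erase (Finset.filter_subset _ _ (hT1sub h'))
      · exact Finset.mem_of_mem_erase (Finset.filter_subset _ _ (hT2sub h'))
    · have hdisj : Disjoint T1 T2 := by
        refine Finset.disjoint_left.mpr (fun m hm1 hm2 => ?_)
        have h1 := (Finset.mem_filter.mp (hT1sub hm1)).2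
        have h2 := (Finset.mem_filter.mp (hT2sub hm2)).2
        exact h2 h1
      have hunion : (T1 ∪ T2).card = T1.card + T2.card := Finset.card_union_of_disjoint hdisj
      have hfil : S1.card + S2.card = (S.erase b).card :=
        Finset.card_filter_add_card_filter_not (fun m => n m = n0)
      have herase : S.card ≤ (S.erase b).card + 1 := by
        by_cases hb : b ∈ S
        · rw [Finset.card_erase_of_mem hb]
          have : 1 ≤ S.card := Finset.card_pos.mpr ⟨b, hb⟩
          omega
        · rw [Finset.erase_eq_of_notMem hb]; omega
      have hpow : 2^(h+1) = 2 * 2^h := by rw [pow_succ]; ring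
      have hpos : 1 ≤ 2^h := Nat.one_le_two_pow
      omega
    · intro m hm
      rcases Finset.mem_union.mp hm with h' | h'
      · exact hT1 m h'
      · exact hT2 m h'

open Finset in
theorem unipotent_representative_in_shifted_domain
    {d : ℕ} (hd : 2 ≤ d)
    (u : Matrix (Fin d) (Fin d) ℝ)
    (hu1 : ∀ i, u i i = 1)
    (hu0 : ∀ i j : Fin d, j < i → u i j = 0)
    (ε : ℝ) (hε : 0 < ε) (hεa : ε < ((2 : ℝ) ^ (3 + 2 ^ (d + 1)))⁻¹) :
    ∃ γ : Matrix (Fin d) (Fin d) ℤ,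
      (∀ i, γ i i = 1) ∧ (∀ i j : Fin d, j < i → γ i j = 0) ∧
      ∃ B : ℝ, B ∈ Set.Icc (1 : ℝ) ((4 : ℝ) ^ (2 ^ d)) ∧
        ∀ i j : Fin d, i < j →
          (u * γ.map (fun k : ℤ => (k : ℝ))) i j ∈
            Set.Ioc (-(1/2) + 4 * B * ε) (1/2 + B * ε) := by
  classical
  set M : ℕ := 2^d with hMdef
  -- the epsilon bound
  have hM : (4:ℝ)^(M+1) * ε ≤ 1/2 := by
    have hexp : 3 + 2^(d+1) = 2*(M + 1) + 1 := by
      have : 2^(d+1) = 2 * 2^d := by rw [pow_succ]; ring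
      omega
    have h4 : (4:ℝ)^(M+1) = 2^(2*(M+1)) := by
      rw [show (4:ℝ) = 2^2 by norm_num, ← pow_mul]
    have hposp : (0:ℝ) < (2:ℝ)^(2*(M+1)) := by positivity
    have h2 : (2:ℝ)^(3+2^(d+1)) = 2^(2*(M+1)) * 2 := by rw [hexp, pow_succ]
    rw [h4]
    have := mul_lt_mul_of_pos_left hεa hposp
    rw [h2, mul_inv, ← mul_assoc, mul_inv_cancel₀ (ne_of_gt hposp), one_mul] at this
    linarith
  -- extended matrix entries
  set u' : ℕ → ℕ → ℝ := fun a b =>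
    if h : a < d ∧ b < d then u ⟨a, h.1⟩ ⟨b, h.2⟩ else 0 with hu'
  -- iterate over columns
  have iter : ∀ c : ℕ, ∃ T : Finset ℕ, T ⊆ Finset.range (M+1) ∧
      M + 1 ≤ T.card + (∑ j ∈ Finset.range c, (2^j - 1)) ∧
      ∀ m ∈ T, ∀ j < c, ∃ g : ℕ → ℤ,
        ∀ i < j, u' i j + g i + (∑ k ∈ Finset.Ico (i+1) j, u' i k * g k) ∈
          Set.Ioc (-(1/2) + 4 * 4^m * ε) (1/2 + 4^m * ε) := by
    intro c
    induction c with
    | zero =>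
      exact ⟨Finset.range (M+1), Finset.Subset.refl _,
        by simp, fun m _ j hj => absurd hj (by omega)⟩
    | succ c IH =>
      obtain ⟨T, hTsub, hTcard, hT⟩ := IH
      obtain ⟨T', hT'sub, hT'card, hT'⟩ := column_reduce ε hε M hM u' c
        (fun i => u' i c) T
        (fun m hm => by have := Finset.mem_range.mp (hTsub hm); omega)
      refine ⟨T', hT'sub.trans hTsub, ?_, ?_⟩
      · rw [Finset.sum_range_succ]
        omega
      · intro m hm j hj
        rcases Nat.lt_succ_iff_lt_or_eq.mp hj with hj' | rfl
        · exact hT m (hT'sub hm) j hj'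
        · exact hT' m hm
  obtain ⟨T, hTsub, hTcard, hT⟩ := iter d
  -- T is nonempty
  have hsumlt : ∀ t : ℕ, (∑ j ∈ Finset.range t, (2^j - 1)) + 1 ≤ 2^t := by
    intro t
    induction t with
    | zero => simp
    | succ t IH =>
      rw [Finset.sum_range_succ]
      have h1 : 1 ≤ 2^t := Nat.one_le_two_pow
      have h2 : 2^(t+1) = 2 * 2^t := by rw [pow_succ]; ring
      omega
  have hTne : ∃ m, m ∈ T := by
    have := hsumlt d
    by_contra hc
    push_neg at hc
    have : T = ∅ := Finset.eq_empty_of_forall_notMem hc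
    rw [this] at hTcard
    simp at hTcard
    omega
  obtain ⟨m, hm⟩ := hTne
  have hmM : m ≤ M := by have := Finset.mem_range.mp (hTsub hm); omega
  -- choose the column vectors
  have hcols : ∀ j : ℕ, ∃ g : ℕ → ℤ, ∀ _ : j < d,
      ∀ i < j, u' i j + g i + (∑ k ∈ Finset.Ico (i+1) j, u' i k * g k) ∈
        Set.Ioc (-(1/2) + 4 * 4^m * ε) (1/2 + 4^m * ε) := by
    intro j
    by_cases hj : j < d
    · obtain ⟨g, hg⟩ := hT m hm j hj
      exact ⟨g, fun _ => hg⟩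
    · exact ⟨0, fun hj' => absurd hj' hj⟩
  choose G hG using hcols
  -- build the matrix
  refine ⟨fun i j => if (i:ℕ) = (j:ℕ) then 1 else if (i:ℕ) < (j:ℕ) then G j i else 0,
    fun i => by simp, fun i j hij => ?_, ?_⟩
  · have hlt : (j:ℕ) < (i:ℕ) := hij
    show (if (i:ℕ) = (j:ℕ) then (1:ℤ) else if (i:ℕ) < (j:ℕ) then G j i else 0) = 0
    rw [if_neg (by omega : ¬ (i:ℕ) = (j:ℕ)), if_neg (by omega : ¬ (i:ℕ) < (j:ℕ))]
  · refine ⟨(4:ℝ)^m, ⟨one_le_pow₀ (by norm_num : (1:ℝ) ≤ 4),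
      pow_le_pow_right₀ (by norm_num : (1:ℝ) ≤ 4) hmM⟩, ?_⟩
    intro i j hij
    have hjd : (j:ℕ) < d := j.isLt
    have hiv : (i:ℕ) < (j:ℕ) := hij
    set f : ℕ → ℝ := fun k =>
      u' i k * (if k = (j:ℕ) then 1 else if k < (j:ℕ) then (G j k : ℝ) else 0) with hf
    have hterm : ∀ k : Fin d, u i k *
        (((if (k:ℕ) = (j:ℕ) then 1 else if (k:ℕ) < (j:ℕ) then G j (k:ℕ) else 0 : ℤ)) : ℝ)
        = f (k:ℕ) := by
      intro k
      have hui : u' (i:ℕ) (k:ℕ) = u i k := by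
        simp only [hu']; rw [dif_pos ⟨i.isLt, k.isLt⟩]
      simp only [hf, hui]
      split_ifs <;> push_cast <;> ring
    have hmul : (u * Matrix.map
        (fun i j : Fin d => if (i:ℕ) = (j:ℕ) then 1 else if (i:ℕ) < (j:ℕ) then G j i else 0)
        (fun k : ℤ => (k : ℝ))) i j = ∑ k ∈ Finset.range d, f k := by
      rw [Matrix.mul_apply]
      rw [← Fin.sum_univ_eq_sum_range f d]
      exact Finset.sum_congr rfl (fun k _ => by rw [← hterm k]; rfl)
    have e1 : ∑ k ∈ Finset.Ico 0 (i:ℕ), f k = 0 := by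
      refine Finset.sum_eq_zero (fun k hk => ?_)
      have hk' := (Finset.mem_Ico.mp hk).2
      have hz : u' (i:ℕ) k = 0 := by
        simp only [hu']; rw [dif_pos ⟨i.isLt, by omega⟩]
        exact hu0 i ⟨k, by omega⟩ (by simpa [Fin.lt_def] using hk')
      simp [hf, hz]
    have e2 : f (i:ℕ) = (G (j:ℕ) (i:ℕ) : ℝ) := by
      have hui : u' (i:ℕ) (i:ℕ) = 1 := by
        simp only [hu']; rw [dif_pos ⟨i.isLt, i.isLt⟩]
        exact hu1 _
      simp only [hf, hui, if_neg (by omega : ¬ (i:ℕ) = (j:ℕ)), if_pos hiv]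
      ring
    have e3 : ∑ k ∈ Finset.Ico ((i:ℕ)+1) (j:ℕ), f k
        = ∑ k ∈ Finset.Ico ((i:ℕ)+1) (j:ℕ), u' (i:ℕ) k * (G (j:ℕ) k : ℝ) := by
      refine Finset.sum_congr rfl (fun k hk => ?_)
      have hk' := (Finset.mem_Ico.mp hk).2
      simp only [hf, if_neg (by omega : ¬ k = (j:ℕ)), if_pos hk']
    have e4 : f (j:ℕ) = u' (i:ℕ) (j:ℕ) := by
      simp [hf]
    have e5 : ∑ k ∈ Finset.Ico ((j:ℕ)+1) d, f k = 0 := by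
      refine Finset.sum_eq_zero (fun k hk => ?_)
      have hk' := (Finset.mem_Ico.mp hk).1
      simp only [hf, if_neg (by omega : ¬ k = (j:ℕ)), if_neg (by omega : ¬ k < (j:ℕ))]
      ring
    have hsum : ∑ k ∈ Finset.range d, f k
        = (G (j:ℕ) (i:ℕ) : ℝ)
          + (∑ k ∈ Finset.Ico ((i:ℕ)+1) (j:ℕ), u' (i:ℕ) k * (G (j:ℕ) k : ℝ))
          + u' (i:ℕ) (j:ℕ) := by
      rw [Finset.range_eq_Ico]
      rw [← Finset.sum_Ico_consecutive f (Nat.zero_le (i:ℕ)) (by omega : (i:ℕ) ≤ d)]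
      rw [← Finset.sum_Ico_consecutive f (by omega : (i:ℕ) ≤ (i:ℕ)+1) (by omega : (i:ℕ)+1 ≤ d)]
      rw [← Finset.sum_Ico_consecutive f (by omega : (i:ℕ)+1 ≤ (j:ℕ)) (by omega : (j:ℕ) ≤ d)]
      rw [← Finset.sum_Ico_consecutive f (by omega : (j:ℕ) ≤ (j:ℕ)+1) (by omega : (j:ℕ)+1 ≤ d)]
      rw [Nat.Ico_succ_singleton, Finset.sum_singleton,
        Nat.Ico_succ_singleton, Finset.sum_singleton] at *
      rw [e1, e2, e3, e4, e5]
      ring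
    rw [hmul, hsum]
    have hcol := hG (j:ℕ) hjd (i:ℕ) hiv
    simp only [Set.mem_Ioc] at hcol ⊢
    constructor
    · linarith [hcol.1]
    · linarith [hcol.2]
end

section
/- Let m, n ∈ ℕ, d = m + n, t_0 > 0, and let ψ: [t_0, ∞) → (0, ∞) be a continuous decreasing function such that t ↦ t·ψ(t) is increasing and ψ(t) < 1/t for all t ≥ t_0. Then there exists a unique continuous decreasing function r: [s_0, ∞) → (0, ∞), where s_0 = (m/d)·log t_0 − (n/d)·log ψ(t_0), such that the function s ↦ s + m·r(s) is increasing and ψ(e^{s − n·r(s)}) = e^{−s − m·r(s)} for all s ≥ s_0. -/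
open Set

set_option maxHeartbeats 1000000 in
theorem dani_correspondence_existence_uniqueness
    (m n : ℕ) (hm : 0 < m) (hn : 0 < n) (d : ℕ) (hd : d = m + n)
    (t₀ : ℝ) (ht₀ : 0 < t₀)
    (ψ : ℝ → ℝ)
    (hψpos : ∀ t ≥ t₀, 0 < ψ t)
    (hcont : ContinuousOn ψ (Set.Ici t₀))
    (hdec : AntitoneOn ψ (Set.Ici t₀))
    (hinc : MonotoneOn (fun t => t * ψ t) (Set.Ici t₀))
    (hlt : ∀ t ≥ t₀, ψ t < 1 / t)
    (s₀ : ℝ)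
    (hs₀ : s₀ = ((m : ℝ) / d) * Real.log t₀ - ((n : ℝ) / d) * Real.log (ψ t₀)) :
    ∃ r : ℝ → ℝ,
      (ContinuousOn r (Set.Ici s₀) ∧ AntitoneOn r (Set.Ici s₀) ∧
        (∀ s ≥ s₀, 0 < r s) ∧
        MonotoneOn (fun s => s + (m : ℝ) * r s) (Set.Ici s₀) ∧
        (∀ s ≥ s₀, ψ (Real.exp (s - (n : ℝ) * r s)) = Real.exp (-s - (m : ℝ) * r s))) ∧
      ∀ r' : ℝ → ℝ,
        (ContinuousOn r' (Set.Ici s₀) ∧ AntitoneOn r' (Set.Ici s₀) ∧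
          (∀ s ≥ s₀, 0 < r' s) ∧
          MonotoneOn (fun s => s + (m : ℝ) * r' s) (Set.Ici s₀) ∧
          (∀ s ≥ s₀, ψ (Real.exp (s - (n : ℝ) * r' s)) = Real.exp (-s - (m : ℝ) * r' s))) →
        ∀ s ≥ s₀, r' s = r s := by
  have hdpos : 0 < (d : ℝ) := by
    have : 0 < d := by omega
    exact_mod_cast this
  have hdne : (d : ℝ) ≠ 0 := ne_of_gt hdpos
  have hmn : (m : ℝ) + (n : ℝ) = (d : ℝ) := by
    rw [hd]; push_cast; ring
  have hmpos : 0 < (m : ℝ) := by exact_mod_cast hm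
  have hnpos : 0 < (n : ℝ) := by exact_mod_cast hn
  set S : ℝ → ℝ := fun t => ((m : ℝ) / d) * Real.log t - ((n : ℝ) / d) * Real.log (ψ t)
    with hSdef
  -- positivity facts
  have htpos : ∀ t ∈ Ici t₀, 0 < t := fun t ht => lt_of_lt_of_le ht₀ ht
  -- log ψ antitone
  have hlogψ : ∀ t₁ ∈ Ici t₀, ∀ t₂ ∈ Ici t₀, t₁ ≤ t₂ →
      Real.log (ψ t₂) ≤ Real.log (ψ t₁) :=
    fun t₁ h₁ t₂ h₂ h =>
      Real.log_le_log (hψpos t₂ h₂) (hdec h₁ h₂ h)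
  -- S strictly monotone
  have hSmono : StrictMonoOn S (Ici t₀) := by
    intro t₁ h₁ t₂ h₂ h
    have h1 : Real.log t₁ < Real.log t₂ :=
      Real.log_lt_log (htpos t₁ h₁) h
    have h2 : Real.log (ψ t₂) ≤ Real.log (ψ t₁) := hlogψ t₁ h₁ t₂ h₂ h.le
    have hmd : 0 < (m : ℝ) / d := div_pos hmpos hdpos
    have hnd : 0 ≤ (n : ℝ) / d := le_of_lt (div_pos hnpos hdpos)
    simp only [hSdef]
    nlinarith
  -- S continuous
  have hScont : ContinuousOn S (Ici t₀) := by
    apply ContinuousOn.sub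
    · exact continuousOn_const.mul
        (Real.continuousOn_log.mono (fun t ht => (htpos t ht).ne'))
    · exact continuousOn_const.mul
        (Real.continuousOn_log.comp hcont (fun t ht => (hψpos t ht).ne'))
  have hSt₀ : S t₀ = s₀ := by rw [hs₀]
  -- surjectivity of S onto Ici s₀
  have hSsurj : ∀ s ≥ s₀, ∃ t, t₀ ≤ t ∧ S t = s := by
    intro s hs
    set X : ℝ := max t₀ (Real.exp (((d : ℝ) / m) * (s + ((n : ℝ) / d) * Real.log (ψ t₀))))
      with hXdef
    have hXt₀ : t₀ ≤ X := le_max_left _ _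
    have hSX : s ≤ S X := by
      have hlogX : ((d : ℝ) / m) * (s + ((n : ℝ) / d) * Real.log (ψ t₀)) ≤ Real.log X := by
        calc ((d : ℝ) / m) * (s + ((n : ℝ) / d) * Real.log (ψ t₀))
            = Real.log (Real.exp (((d : ℝ) / m) * (s + ((n : ℝ) / d) * Real.log (ψ t₀)))) := by
              rw [Real.log_exp]
          _ ≤ Real.log X := Real.log_le_log (Real.exp_pos _) (le_max_right _ _)
      have h2 : Real.log (ψ X) ≤ Real.log (ψ t₀) :=
        hlogψ t₀ self_mem_Ici X hXt₀ hXt₀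
      have hmd : 0 < (m : ℝ) / d := div_pos hmpos hdpos
      have hnd : 0 < (n : ℝ) / d := div_pos hnpos hdpos
      have : ((m : ℝ) / d) * (((d : ℝ) / m) * (s + ((n : ℝ) / d) * Real.log (ψ t₀)))
          = s + ((n : ℝ) / d) * Real.log (ψ t₀) := by
        field_simp
      simp only [hSdef]
      nlinarith [hmd, hnd, hlogX, h2]
    have := intermediate_value_Icc hXt₀ (hScont.mono (Icc_subset_Ici_self))
    have hmem : s ∈ Icc (S t₀) (S X) := ⟨by rw [hSt₀]; exact hs, hSX⟩
    obtain ⟨t, ht, hts⟩ := this hmem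
    exact ⟨t, ht.1, hts⟩
  -- choose T
  have hex : ∀ s : ℝ, ∃ t, t₀ ≤ t ∧ (s₀ ≤ s → S t = s) := by
    intro s
    by_cases h : s₀ ≤ s
    · obtain ⟨t, ht, hts⟩ := hSsurj s h
      exact ⟨t, ht, fun _ => hts⟩
    · exact ⟨t₀, le_refl _, fun h' => absurd h' h⟩
  choose T hT₁ hT₂ using hex
  -- basic properties of T
  have hTpos : ∀ s, 0 < T s := fun s => lt_of_lt_of_le ht₀ (hT₁ s)
  have hTmem : ∀ s, T s ∈ Ici t₀ := fun s => hT₁ s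
  have hTmono : MonotoneOn T (Ici s₀) := by
    intro s₁ h₁ s₂ h₂ h
    have : S (T s₁) ≤ S (T s₂) := by rw [hT₂ s₁ h₁, hT₂ s₂ h₂]; exact h
    exact (hSmono.le_iff_le (hTmem s₁) (hTmem s₂)).1 this
  have hTs₀ : T s₀ = t₀ := by
    apply hSmono.injOn (hTmem s₀) self_mem_Ici
    rw [hT₂ s₀ le_rfl, hSt₀]
  have hTgt : ∀ s, s₀ < s → t₀ < T s := by
    intro s hs
    rcases lt_or_eq_of_le (hT₁ s) with h | h
    · exact h
    · exfalso
      have : S (T s) = s := hT₂ s hs.le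
      rw [← h, hSt₀] at this
      exact absurd this (ne_of_lt hs)
  have hSle : ∀ t ∈ Ici t₀, s₀ ≤ S t := by
    intro t ht
    rw [← hSt₀]
    rcases eq_or_lt_of_le (show t₀ ≤ t from ht) with h | h
    · exact le_of_eq (by rw [h])
    · exact (hSmono self_mem_Ici ht h).le
  have hTsurj : ∀ t ∈ Ici t₀, ∃ s ∈ Ici s₀, T s = t := by
    intro t ht
    refine ⟨S t, hSle t ht, ?_⟩
    exact hSmono.injOn (hTmem _) ht (hT₂ _ (hSle t ht))
  have hTimg : T '' Ici s₀ = Ici t₀ := by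
    apply Subset.antisymm
    · rintro _ ⟨s, hs, rfl⟩
      exact hTmem s
    · intro t ht
      obtain ⟨s, hs, hst⟩ := hTsurj t ht
      exact ⟨s, hs, hst⟩
  -- continuity of T
  have hTcont : ContinuousOn T (Ici s₀) := by
    intro a ha
    rcases eq_or_lt_of_le (show s₀ ≤ a from ha) with h | h
    · subst h
      exact continuousWithinAt_right_of_monotoneOn_of_image_mem_nhdsWithin hTmono
        self_mem_nhdsWithin (by rw [hTimg, hTs₀]; exact self_mem_nhdsWithin)
    · apply ContinuousAt.continuousWithinAt
      apply continuousAt_of_monotoneOn_of_image_mem_nhds hTmono (Ici_mem_nhds h)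
      rw [hTimg]
      exact Ici_mem_nhds (hTgt a h)
  -- define r
  set r : ℝ → ℝ := fun s => -(1 / (d : ℝ)) * Real.log (T s * ψ (T s)) with hrdef
  have hψTpos : ∀ s, 0 < ψ (T s) := fun s => hψpos _ (hT₁ s)
  have hprodpos : ∀ s, 0 < T s * ψ (T s) := fun s => mul_pos (hTpos s) (hψTpos s)
  have hprodlt : ∀ s, T s * ψ (T s) < 1 := by
    intro s
    have := hlt (T s) (hT₁ s)
    have hp := hTpos s
    rw [div_eq_mul_inv, one_mul] at this
    calc T s * ψ (T s) < T s * (T s)⁻¹ := by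
          exact mul_lt_mul_of_pos_left this hp
      _ = 1 := mul_inv_cancel₀ (ne_of_gt hp)
  -- r in terms of logs
  have hrlog : ∀ s, r s = -(1 / (d : ℝ)) * (Real.log (T s) + Real.log (ψ (T s))) := by
    intro s
    rw [hrdef]
    simp only
    rw [Real.log_mul (ne_of_gt (hTpos s)) (ne_of_gt (hψTpos s))]
  -- key identities
  have hmn0 : (m : ℝ) + (n : ℝ) ≠ 0 := by positivity
  have hSmul : ∀ t, (d : ℝ) * S t = (m : ℝ) * Real.log t - (n : ℝ) * Real.log (ψ t) := by
    intro t
    simp only [hSdef]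
    field_simp
  have key₁ : ∀ s ≥ s₀, s - (n : ℝ) * r s = Real.log (T s) := by
    intro s hs
    have h := hSmul (T s)
    rw [hT₂ s hs] at h
    rw [← hmn] at h
    rw [hrlog s, ← hmn]
    field_simp
    linear_combination h
  have key₂ : ∀ s ≥ s₀, s + (m : ℝ) * r s = -Real.log (ψ (T s)) := by
    intro s hs
    have h := hSmul (T s)
    rw [hT₂ s hs] at h
    rw [← hmn] at h
    rw [hrlog s, ← hmn]
    field_simp
    linear_combination h
  -- properties of r
  have hrcont : ContinuousOn r (Ici s₀) := by
    apply ContinuousOn.mul continuousOn_const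
    apply ContinuousOn.log
    · exact hTcont.mul (hcont.comp hTcont (fun s _ => hTmem s))
    · exact fun s _ => ne_of_gt (hprodpos s)
  have hranti : AntitoneOn r (Ici s₀) := by
    intro s₁ h₁ s₂ h₂ h
    have hle : T s₁ * ψ (T s₁) ≤ T s₂ * ψ (T s₂) :=
      hinc (hTmem s₁) (hTmem s₂) (hTmono h₁ h₂ h)
    have hlog : Real.log (T s₁ * ψ (T s₁)) ≤ Real.log (T s₂ * ψ (T s₂)) :=
      Real.log_le_log (hprodpos s₁) hle
    simp only [hrdef]
    exact mul_le_mul_of_nonpos_left hlog (by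
      have : 0 < 1 / (d : ℝ) := by positivity
      linarith)
  have hrpos : ∀ s ≥ s₀, 0 < r s := by
    intro s _
    have : Real.log (T s * ψ (T s)) < 0 :=
      Real.log_neg (hprodpos s) (hprodlt s)
    simp only [hrdef]
    have h1d : -(1 / (d : ℝ)) < 0 := by
      have : 0 < 1 / (d : ℝ) := by positivity
      linarith
    exact mul_pos_of_neg_of_neg h1d this
  have hrmono : MonotoneOn (fun s => s + (m : ℝ) * r s) (Ici s₀) := by
    intro s₁ h₁ s₂ h₂ h
    simp only
    rw [key₂ s₁ h₁, key₂ s₂ h₂]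
    have : ψ (T s₂) ≤ ψ (T s₁) := hdec (hTmem s₁) (hTmem s₂) (hTmono h₁ h₂ h)
    have := Real.log_le_log (hψTpos s₂) this
    linarith
  have hreq : ∀ s ≥ s₀, ψ (Real.exp (s - (n : ℝ) * r s)) = Real.exp (-s - (m : ℝ) * r s) := by
    intro s hs
    rw [key₁ s hs, Real.exp_log (hTpos s)]
    have : -s - (m : ℝ) * r s = -(s + (m : ℝ) * r s) := by ring
    rw [this, key₂ s hs, neg_neg, Real.exp_log (hψTpos s)]
  refine ⟨r, ⟨hrcont, hranti, hrpos, hrmono, hreq⟩, ?_⟩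
  -- uniqueness
  rintro r' ⟨hc', ha', hp', hm', he'⟩ s hs
  set g : ℝ → ℝ := fun s => Real.exp (s - (n : ℝ) * r' s) with hgdef
  have hglog : ∀ s, Real.log (g s) = s - (n : ℝ) * r' s := fun s => Real.log_exp _
  have hgpos : ∀ s, 0 < g s := fun s => Real.exp_pos _
  have hSg : ∀ s ≥ s₀, S (g s) = s := by
    intro s hs
    have hψg : ψ (g s) = Real.exp (-s - (m : ℝ) * r' s) := he' s hs
    have hlogψg : Real.log (ψ (g s)) = -s - (m : ℝ) * r' s := by
      rw [hψg, Real.log_exp]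
    simp only [hSdef]
    rw [hglog s, hlogψg, ← hmn]
    have hmn0 : (m : ℝ) + (n : ℝ) ≠ 0 := by positivity
    field_simp
    ring
  have hgmono : MonotoneOn g (Ici s₀) := by
    intro s₁ h₁ s₂ h₂ h
    apply Real.exp_le_exp.2
    have hA : s₁ + (m : ℝ) * r' s₁ ≤ s₂ + (m : ℝ) * r' s₂ := hm' h₁ h₂ h
    have hB : r' s₂ ≤ r' s₁ := ha' h₁ h₂ h
    nlinarith [hmpos, hnpos]
  have hgcont : ContinuousOn g (Ici s₀) := by
    apply Real.continuous_exp.comp_continuousOn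
    exact (continuousOn_id.sub (continuousOn_const.mul hc'))
  -- g s ≥ t₀ for all s ≥ s₀
  have hgge : ∀ s ≥ s₀, t₀ ≤ g s := by
    by_contra hcon
    push_neg at hcon
    obtain ⟨s₁, hs₁, hgs₁⟩ := hcon
    -- find s₂ ≥ s₁ with g s₂ ≥ t₀
    set s₂ : ℝ := max s₁ (Real.log t₀ + (n : ℝ) * r' s₀) with hs₂def
    have hs₁s₂ : s₁ ≤ s₂ := le_max_left _ _
    have hs₂mem : s₀ ≤ s₂ := le_trans hs₁ hs₁s₂
    have hgs₂ : t₀ ≤ g s₂ := by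
      have h1 : Real.log t₀ + (n : ℝ) * r' s₀ ≤ s₂ := le_max_right _ _
      have h2 : r' s₂ ≤ r' s₀ := ha' self_mem_Ici hs₂mem hs₂mem
      have h3 : Real.log t₀ ≤ s₂ - (n : ℝ) * r' s₂ := by nlinarith [hnpos]
      calc t₀ = Real.exp (Real.log t₀) := (Real.exp_log ht₀).symm
        _ ≤ g s₂ := Real.exp_le_exp.2 h3
    -- IVT to find σ with g σ = t₀
    have hivt := intermediate_value_Icc hs₁s₂
      (hgcont.mono (Icc_subset_Ici_self.trans (Ici_subset_Ici.2 hs₁)))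
    have hmem : t₀ ∈ Icc (g s₁) (g s₂) := ⟨hgs₁.le, hgs₂⟩
    obtain ⟨σ, hσ, hgσ⟩ := hivt hmem
    have hσs₀ : s₀ ≤ σ := le_trans hs₁ hσ.1
    have : S (g σ) = σ := hSg σ hσs₀
    rw [hgσ, hSt₀] at this
    -- σ = s₀, so s₁ ≤ σ = s₀ ≤ s₁, s₁ = σ
    have hσeq : σ = s₀ := this.symm
    have hs₁σ : s₁ = σ := le_antisymm hσ.1 (by rw [hσeq]; exact hs₁)
    rw [← hs₁σ] at hgσ
    rw [hgσ] at hgs₁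
    exact lt_irrefl _ hgs₁
  -- now g s = T s
  have hgT : g s = T s := by
    apply hSmono.injOn (hgge s hs) (hTmem s)
    rw [hSg s hs, hT₂ s hs]
  have hlogeq : s - (n : ℝ) * r' s = s - (n : ℝ) * r s := by
    rw [← hglog s, hgT, ← key₁ s hs]
  have : (n : ℝ) * r' s = (n : ℝ) * r s := by linarith
  exact mul_left_cancel₀ (ne_of_gt hnpos) this
end

section
/- Fix d ≥ 2 and r ∈ (0, 1/2), C > 0. Define K̄_{r,C} ⊂ SL_d(ℝ) as the set of g = (g_{ij}) with: 1 − r ≤ g_{ii} ≤ 1 + C·r for all i; |g_{ij}| < 1 and |g_{ij}·g_{ji}| ≤ C·r for all i ≠ j; and |det(g̃) − 1| < 1/2 where g̃ is the top-left (d−1)×(d−1) block. Then the Haar measure of K̄_{r,C} is ≪_{d,C} r^{κ_d + 1} · (log(1/r))^{λ_d}, where κ_d = (d² + d − 4)/2 and λ_d = d(d−1)/2. -/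
open Set MeasureTheory

/-- The set `K̄_{r,C}`: matrices `g ∈ SL_{n+1}(ℝ)` with `1 - r ≤ g_{ii} ≤ 1 + C·r`,
`|g_{ij}| < 1` and `|g_{ij} g_{ji}| ≤ C·r` for `i ≠ j`, and whose top-left `n×n`
block `g̃` satisfies `|det g̃ - 1| < 1/2`. -/
def Kbar (n : ℕ) (r C : ℝ) : Set (Matrix (Fin (n + 1)) (Fin (n + 1)) ℝ) :=
  {g | g.det = 1 ∧
    (∀ i, 1 - r ≤ g i i ∧ g i i ≤ 1 + C * r) ∧
    (∀ i j : Fin (n + 1), i ≠ j → |g i j| < 1 ∧ |g i j * g j i| ≤ C * r) ∧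
    |(Matrix.of fun i j : Fin n => g i.castSucc j.castSucc).det - 1| < 1 / 2}

/-- The coordinate chart on `SL_{n+1}(ℝ)` (near matrices with `det g̃ ≈ 1`) recording all
matrix entries except the `(d,d)` entry.  By the explicit description of Haar measure on
`SL_d(ℝ)` in these coordinates, on the region `|det g̃ - 1| < 1/2` the Haar measure of a set
is comparable (up to constants depending only on `d`) to the Lebesgue measure of its image
under this chart. -/
def slChart (n : ℕ) (g : Matrix (Fin (n + 1)) (Fin (n + 1)) ℝ)
    (p : {q : Fin (n + 1) × Fin (n + 1) // q ≠ (Fin.last n, Fin.last n)}) : ℝ :=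
  g p.1.1 p.1.2

namespace KbarAux

abbrev PairIdx (n : ℕ) := {p : Fin (n + 1) × Fin (n + 1) // p.1 < p.2}
abbrev CoordIdx (n : ℕ) := {q : Fin (n + 1) × Fin (n + 1) // q ≠ (Fin.last n, Fin.last n)}

lemma card_pairIdx (n : ℕ) : Fintype.card (PairIdx n) = (n + 1) * n / 2 := by
  classical
  set d := n + 1
  set S := (Finset.univ : Finset (Fin d × Fin d)).filter (fun p => p.1 < p.2) with hS
  set T := (Finset.univ : Finset (Fin d × Fin d)).filter (fun p => ¬ p.1 < p.2) with hT
  have hcard : Fintype.card (PairIdx n) = S.card := Fintype.card_subtype _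
  have h1 : S.card + T.card = d * d := by
    rw [hS, hT, Finset.card_filter_add_card_filter_not]
    simp [Fintype.card_prod]
  have h2 : (T.filter (fun p => p.2 < p.1)).card
      + (T.filter (fun p => ¬ p.2 < p.1)).card = T.card :=
    Finset.card_filter_add_card_filter_not _
  have h3 : T.filter (fun p => p.2 < p.1)
      = (Finset.univ : Finset (Fin d × Fin d)).filter (fun p => p.2 < p.1) := by
    rw [hT, Finset.filter_filter]
    apply Finset.filter_congr
    intro p _
    constructor
    · tauto
    · intro h; exact ⟨asymm h, h⟩
  have h4 : T.filter (fun p => ¬ p.2 < p.1)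
      = (Finset.univ : Finset (Fin d × Fin d)).filter (fun p => p.1 = p.2) := by
    rw [hT, Finset.filter_filter]
    apply Finset.filter_congr
    intro p _
    simp only [not_lt]
    constructor
    · rintro ⟨h, h'⟩; exact le_antisymm h' h
    · rintro h; simp [h]
  have h5 : ((Finset.univ : Finset (Fin d × Fin d)).filter (fun p => p.2 < p.1)).card
      = S.card := by
    rw [hS]
    apply Finset.card_bij (fun p _ => Prod.swap p)
    · intro p hp; simp only [Finset.mem_filter] at hp ⊢; exact ⟨Finset.mem_univ _, hp.2⟩
    · intro p _ q _ h; exact Prod.swap_injective h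
    · intro p hp
      simp only [Finset.mem_filter] at hp
      exact ⟨Prod.swap p, by simp [hp.2], by simp⟩
  have h6 : ((Finset.univ : Finset (Fin d × Fin d)).filter (fun p => p.1 = p.2)).card = d := by
    have : (Finset.univ : Finset (Fin d × Fin d)).filter (fun p => p.1 = p.2)
        = (Finset.univ : Finset (Fin d)).diag := by
      ext ⟨a, b⟩; simp [Finset.mem_diag]
    rw [this, Finset.diag_card]
    simp
  obtain ⟨k, hk⟩ := Nat.even_mul_succ_self n
  have hg : (n + 1) * n = 2 * k := by rw [Nat.mul_comm]; omega
  have hdd : d * d = 2 * k + d := by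
    have : d * d = (n + 1) * n + d := by simp only [d]; ring
    rw [this, hg]
  rw [hcard, hg]
  rw [h3, h4] at h2
  rw [hdd] at h1
  rw [h5, h6] at h2
  omega


def phi (n : ℕ) : Fin n ⊕ (PairIdx n × Bool) → CoordIdx n
  | Sum.inl i => ⟨(i.castSucc, i.castSucc), by
      simp only [ne_eq, Prod.mk.injEq, not_and]
      intro h; exact absurd h (Fin.castSucc_lt_last i).ne⟩
  | Sum.inr (p, true) => ⟨p.1, by
      intro h
      have hp := p.2
      rw [show p.1.1 = Fin.last n from congrArg Prod.fst h,
        show p.1.2 = Fin.last n from congrArg Prod.snd h] at hp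
      exact lt_irrefl _ hp⟩
  | Sum.inr (p, false) => ⟨(p.1.2, p.1.1), by
      simp only [ne_eq, Prod.mk.injEq, not_and]
      intro h1 h2
      have hp := p.2
      rw [h1, h2] at hp
      exact lt_irrefl _ hp⟩

lemma phi_bijective (n : ℕ) : Function.Bijective (phi n) := by
  have hcP : Fintype.card (PairIdx n) = (n + 1) * n / 2 := card_pairIdx n
  rw [Fintype.bijective_iff_surjective_and_card]
  constructor
  · rintro ⟨⟨i, j⟩, hq⟩
    rcases lt_trichotomy i j with h | h | h
    · exact ⟨Sum.inr (⟨(i, j), h⟩, true), rfl⟩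
    · have hi : i ≠ Fin.last n := by
        rintro rfl
        exact hq (by rw [Prod.mk.injEq]; exact ⟨rfl, h.symm⟩)
      refine ⟨Sum.inl ((i.castPred hi)), ?_⟩
      simp only [phi, Fin.castSucc_castPred]
      congr 1
      rw [Prod.mk.injEq]
      exact ⟨rfl, h⟩
    · exact ⟨Sum.inr (⟨(j, i), h⟩, false), rfl⟩
  · obtain ⟨k, hk⟩ := Nat.even_mul_succ_self n
    have hg : (n + 1) * n = 2 * k := by rw [Nat.mul_comm]; omega
    have h1 : Fintype.card (Fin n ⊕ (PairIdx n × Bool)) = n + 2 * k := by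
      simp [Fintype.card_sum, Fintype.card_prod, hcP, hg]; ring
    have h2 : Fintype.card (CoordIdx n) = (n + 1) * (n + 1) - 1 := by
      have := Fintype.card_subtype_compl (fun q : Fin (n + 1) × Fin (n + 1) =>
        q = (Fin.last n, Fin.last n))
      simp only [Fintype.card_subtype_eq] at this
      convert this using 2
      simp [Fintype.card_prod]
    have h3 : (n + 1) * (n + 1) = 2 * k + n + 1 := by
      have : (n + 1) * (n + 1) = (n + 1) * n + (n + 1) := by ring
      omega
    rw [h1, h2]
    omega


lemma pair_exists {a x y : ℝ} {N : ℕ} (ha : 0 < a) (hx : |x| < 1) (hy : |y| < 1)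
    (hxy : |x * y| ≤ a) (hN : 1 ≤ a * 2 ^ N) :
    ∃ k : Fin (N + 1), |x| ≤ (1 / 2 : ℝ) ^ (k : ℕ) ∧
      |y| ≤ min 1 (2 ^ ((k : ℕ) + 1) * a) := by
  rcases le_or_gt |x| ((1 / 2 : ℝ) ^ N) with hcase | hcase
  · refine ⟨Fin.last N, hcase, le_min hy.le ?_⟩
    have h2 : (2 : ℝ) ^ (N + 1) * a = 2 * (a * 2 ^ N) := by ring
    have : (1 : ℝ) ≤ 2 ^ (N + 1) * a := by
      rw [h2]; nlinarith
    exact hy.le.trans this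
  · have hx0 : 0 < |x| := lt_of_le_of_lt (by positivity) hcase
    have hinv1 : 1 ≤ |x|⁻¹ := by
      rw [le_inv_comm₀ one_pos hx0]
      simpa using hx.le
    set b := ⌊|x|⁻¹⌋₊ with hb
    have hb1 : 1 ≤ b := Nat.le_floor (by exact_mod_cast hinv1)
    have hbne : b ≠ 0 := by omega
    have hinvlt : |x|⁻¹ < 2 ^ N := by
      have : ((1 : ℝ) / 2) ^ N = ((2 : ℝ) ^ N)⁻¹ := by
        rw [one_div, inv_pow]
      rw [this] at hcase
      calc |x|⁻¹ < (((2 : ℝ) ^ N)⁻¹)⁻¹ := by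
            exact inv_strictAnti₀ (by positivity) hcase
        _ = 2 ^ N := by rw [inv_inv]
    have hblt : b < 2 ^ N := by
      have : (b : ℝ) < 2 ^ N := lt_of_le_of_lt (Nat.floor_le (by positivity)) hinvlt
      exact_mod_cast this
    set k := Nat.log 2 b with hkdef
    have hkN : k < N := Nat.log_lt_of_lt_pow hbne hblt
    refine ⟨⟨k, by omega⟩, ?_, ?_⟩
    · have hpow : (2 : ℝ) ^ k ≤ b := by exact_mod_cast Nat.pow_log_le_self 2 hbne
      have h1 : (2 : ℝ) ^ k ≤ |x|⁻¹ := hpow.trans (Nat.floor_le (by positivity))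
      have h2 : |x| * 2 ^ k ≤ 1 := by
        calc |x| * 2 ^ k ≤ |x| * |x|⁻¹ := by
              exact mul_le_mul_of_nonneg_left h1 (abs_nonneg x)
          _ = 1 := mul_inv_cancel₀ hx0.ne'
      have h3 : |x| ≤ 1 / 2 ^ k := (le_div_iff₀ (by positivity)).mpr h2
      simpa [div_pow] using h3
    · refine le_min hy.le ?_
      have hflo : |x|⁻¹ < (b : ℝ) + 1 := Nat.lt_floor_add_one _
      have hb2 : (b : ℝ) + 1 ≤ 2 ^ (k + 1) := by
        have h0 : b + 1 ≤ 2 ^ (k + 1) := Nat.lt_pow_succ_log_self one_lt_two b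
        exact_mod_cast h0
      have habs : |x| * |y| ≤ a := by rw [← abs_mul]; exact hxy
      have : |y| ≤ a * |x|⁻¹ := by
        have hd : |y| ≤ a / |x| := (le_div_iff₀ hx0).mpr (by nlinarith [habs, abs_nonneg y])
        rwa [div_eq_mul_inv] at hd
      calc |y| ≤ a * |x|⁻¹ := this
        _ ≤ a * 2 ^ (k + 1) := by
            apply mul_le_mul_of_nonneg_left _ ha.le
            exact hflo.le.trans hb2
        _ = 2 ^ (k + 1) * a := by ring


def boxI (n N : ℕ) (r C : ℝ) (f : PairIdx n → Fin (N + 1)) (q : CoordIdx n) : Set ℝ :=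
  if q.1.1 = q.1.2 then Set.Icc (1 - r) (1 + C * r)
  else if h : q.1.1 < q.1.2 then
    Set.Icc (-((1 / 2 : ℝ) ^ ((f ⟨(q.1.1, q.1.2), h⟩ : Fin (N + 1)) : ℕ)))
      ((1 / 2 : ℝ) ^ ((f ⟨(q.1.1, q.1.2), h⟩ : Fin (N + 1)) : ℕ))
  else if h' : q.1.2 < q.1.1 then
    Set.Icc (-(min 1 (2 ^ (((f ⟨(q.1.2, q.1.1), h'⟩ : Fin (N + 1)) : ℕ) + 1) * (C * r))))
      (min 1 (2 ^ (((f ⟨(q.1.2, q.1.1), h'⟩ : Fin (N + 1)) : ℕ) + 1) * (C * r)))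
  else ∅

lemma boxI_diag {n N : ℕ} {r C : ℝ} (f : PairIdx n → Fin (N + 1)) (q : CoordIdx n)
    (h : q.1.1 = q.1.2) : boxI n N r C f q = Set.Icc (1 - r) (1 + C * r) := if_pos h

lemma boxI_up {n N : ℕ} {r C : ℝ} (f : PairIdx n → Fin (N + 1)) (q : CoordIdx n)
    (h : q.1.1 < q.1.2) :
    boxI n N r C f q =
      Set.Icc (-((1 / 2 : ℝ) ^ ((f ⟨(q.1.1, q.1.2), h⟩ : Fin (N + 1)) : ℕ)))
        ((1 / 2 : ℝ) ^ ((f ⟨(q.1.1, q.1.2), h⟩ : Fin (N + 1)) : ℕ)) := by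
  rw [boxI, if_neg (ne_of_lt h), dif_pos h]

lemma boxI_lo {n N : ℕ} {r C : ℝ} (f : PairIdx n → Fin (N + 1)) (q : CoordIdx n)
    (h : q.1.2 < q.1.1) :
    boxI n N r C f q =
      Set.Icc (-(min 1 (2 ^ (((f ⟨(q.1.2, q.1.1), h⟩ : Fin (N + 1)) : ℕ) + 1) * (C * r))))
        (min 1 (2 ^ (((f ⟨(q.1.2, q.1.1), h⟩ : Fin (N + 1)) : ℕ) + 1) * (C * r))) := by
  rw [boxI, if_neg (ne_of_gt h), dif_neg (asymm h), dif_pos h]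


lemma cover {n N : ℕ} {r C : ℝ} (hr : 0 < r) (hC : 0 < C) (hN : 1 ≤ C * r * 2 ^ N)
    {g : Matrix (Fin (n + 1)) (Fin (n + 1)) ℝ} (hg : g ∈ Kbar n r C) :
    ∃ f : PairIdx n → Fin (N + 1), slChart n g ∈ Set.pi Set.univ (boxI n N r C f) := by
  obtain ⟨-, hdiag, hoff, -⟩ := hg
  have hpair : ∀ p : PairIdx n, ∃ k : Fin (N + 1),
      |g p.1.1 p.1.2| ≤ (1 / 2 : ℝ) ^ (k : ℕ) ∧
      |g p.1.2 p.1.1| ≤ min 1 (2 ^ ((k : ℕ) + 1) * (C * r)) := by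
    intro p
    have hne : p.1.1 ≠ p.1.2 := ne_of_lt p.2
    obtain ⟨hx1, hxy⟩ := hoff _ _ hne
    obtain ⟨hy1, -⟩ := hoff _ _ hne.symm
    exact pair_exists (by positivity) hx1 hy1 hxy hN
  choose f hf1 hf2 using hpair
  refine ⟨f, fun q _ => ?_⟩
  rcases lt_trichotomy q.1.1 q.1.2 with h | h | h
  · rw [boxI_up f q h]
    have := hf1 ⟨(q.1.1, q.1.2), h⟩
    rw [Set.mem_Icc]
    constructor
    · exact neg_le_of_abs_le this
    · exact le_of_abs_le this
  · rw [boxI_diag f q h]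
    have hd := hdiag q.1.1
    show g q.1.1 q.1.2 ∈ _
    rw [← h, Set.mem_Icc]
    exact hd
  · rw [boxI_lo f q h]
    have := hf2 ⟨(q.1.2, q.1.1), h⟩
    rw [Set.mem_Icc]
    exact ⟨neg_le_of_abs_le this, le_of_abs_le this⟩


lemma vol_bound (n N : ℕ) (r C : ℝ) (hr : 0 < r) (hC : 0 < C) :
    volume (⋃ f : PairIdx n → Fin (N + 1), Set.pi Set.univ (boxI n N r C f)) ≤
      ENNReal.ofReal ((1 + C) * r) ^ n *
        ENNReal.ofReal (8 * (C * r) * ((N : ℝ) + 1)) ^ ((n + 1) * n / 2) := by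
  classical
  have key : ∀ f : PairIdx n → Fin (N + 1),
      volume (Set.pi Set.univ (boxI n N r C f)) =
        ENNReal.ofReal ((1 + C) * r) ^ n *
          ∏ p : PairIdx n,
            (ENNReal.ofReal (2 * (1 / 2 : ℝ) ^ ((f p : ℕ))) *
             ENNReal.ofReal (2 * min 1 (2 ^ ((f p : ℕ) + 1) * (C * r)))) := by
    intro f
    rw [volume_pi_pi]
    rw [← Fintype.prod_bijective (phi n) (phi_bijective n)
      (fun s => volume (boxI n N r C f (phi n s))) _ (fun s => rfl)]
    rw [Fintype.prod_sum_type]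
    congr 1
    · -- diagonal part
      have : ∀ i : Fin n, volume (boxI n N r C f (phi n (Sum.inl i)))
          = ENNReal.ofReal ((1 + C) * r) := by
        intro i
        have hd : (phi n (Sum.inl i)).1.1 = (phi n (Sum.inl i)).1.2 := rfl
        rw [boxI, if_pos hd, Real.volume_Icc]
        congr 1; ring
      simp only [this, Finset.prod_const, Finset.card_univ, Fintype.card_fin]
    · rw [Fintype.prod_prod_type]
      apply Finset.prod_congr rfl
      intro p _
      rw [Fintype.prod_bool]
      have hup : (phi n (Sum.inr (p, true))).1.1 < (phi n (Sum.inr (p, true))).1.2 := p.2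
      have hlo : (phi n (Sum.inr (p, false))).1.2 < (phi n (Sum.inr (p, false))).1.1 := p.2
      rw [show boxI n N r C f (phi n (Sum.inr (p, true)))
          = Set.Icc (-((1 / 2 : ℝ) ^ ((f p : ℕ)))) ((1 / 2 : ℝ) ^ ((f p : ℕ))) by
        rw [boxI, if_neg (ne_of_lt hup), dif_pos hup]
        rfl]
      rw [show boxI n N r C f (phi n (Sum.inr (p, false)))
          = Set.Icc (-(min 1 (2 ^ ((f p : ℕ) + 1) * (C * r))))
              (min 1 (2 ^ ((f p : ℕ) + 1) * (C * r))) by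
        rw [boxI, if_neg (ne_of_gt hlo), dif_neg (asymm hlo), dif_pos hlo]
        rfl]
      rw [Real.volume_Icc, Real.volume_Icc]
      congr 2
      · ring
      · ring
  calc volume (⋃ f : PairIdx n → Fin (N + 1), Set.pi Set.univ (boxI n N r C f))
      ≤ ∑' f : PairIdx n → Fin (N + 1), volume (Set.pi Set.univ (boxI n N r C f)) :=
        measure_iUnion_le _
    _ = ∑ f : PairIdx n → Fin (N + 1), volume (Set.pi Set.univ (boxI n N r C f)) :=
        tsum_fintype _
    _ = ENNReal.ofReal ((1 + C) * r) ^ n *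
          ∑ f : PairIdx n → Fin (N + 1), ∏ p : PairIdx n,
            (ENNReal.ofReal (2 * (1 / 2 : ℝ) ^ ((f p : ℕ))) *
             ENNReal.ofReal (2 * min 1 (2 ^ ((f p : ℕ) + 1) * (C * r)))) := by
        rw [Finset.mul_sum]
        exact Finset.sum_congr rfl fun f _ => key f
    _ = ENNReal.ofReal ((1 + C) * r) ^ n *
          ∏ _p : PairIdx n, ∑ k : Fin (N + 1),
            (ENNReal.ofReal (2 * (1 / 2 : ℝ) ^ ((k : ℕ))) *
             ENNReal.ofReal (2 * min 1 (2 ^ ((k : ℕ) + 1) * (C * r)))) := by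
        congr 1
        rw [← Finset.sum_prod_piFinset Finset.univ
          (fun (_ : PairIdx n) (k : Fin (N + 1)) =>
            (ENNReal.ofReal (2 * (1 / 2 : ℝ) ^ ((k : ℕ))) *
             ENNReal.ofReal (2 * min 1 (2 ^ ((k : ℕ) + 1) * (C * r)))))]
        rw [Fintype.piFinset_univ]
    _ ≤ ENNReal.ofReal ((1 + C) * r) ^ n *
          ∏ _p : PairIdx n, ENNReal.ofReal (8 * (C * r) * ((N : ℝ) + 1)) := by
        apply mul_le_mul_right
        apply Finset.prod_le_prod'
        intro p _
        calc ∑ k : Fin (N + 1),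
            (ENNReal.ofReal (2 * (1 / 2 : ℝ) ^ ((k : ℕ))) *
             ENNReal.ofReal (2 * min 1 (2 ^ ((k : ℕ) + 1) * (C * r))))
            ≤ ∑ _k : Fin (N + 1), ENNReal.ofReal (8 * (C * r)) := by
              apply Finset.sum_le_sum
              intro k _
              rw [← ENNReal.ofReal_mul (by positivity)]
              apply ENNReal.ofReal_le_ofReal
              have haux : (1 / 2 : ℝ) ^ ((k : ℕ)) * 2 ^ ((k : ℕ)) = 1 := by
                rw [← mul_pow]; norm_num
              have hmin : min 1 (2 ^ ((k : ℕ) + 1) * (C * r))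
                  ≤ 2 ^ ((k : ℕ) + 1) * (C * r) := min_le_right _ _
              have h2 : (0 : ℝ) ≤ (1 / 2 : ℝ) ^ ((k : ℕ)) := by positivity
              calc 2 * (1 / 2 : ℝ) ^ ((k : ℕ)) * (2 * min 1 (2 ^ ((k : ℕ) + 1) * (C * r)))
                  ≤ 2 * (1 / 2 : ℝ) ^ ((k : ℕ)) * (2 * (2 ^ ((k : ℕ) + 1) * (C * r))) := by
                    apply mul_le_mul_of_nonneg_left _ (by positivity)
                    apply mul_le_mul_of_nonneg_left hmin (by norm_num)
                _ = 8 * (C * r) * ((1 / 2 : ℝ) ^ ((k : ℕ)) * 2 ^ ((k : ℕ))) := by ring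
                _ = 8 * (C * r) := by rw [haux]; ring
          _ = ENNReal.ofReal (8 * (C * r) * ((N : ℝ) + 1)) := by
              rw [Finset.sum_const, Finset.card_univ, Fintype.card_fin, nsmul_eq_mul]
              rw [← ENNReal.ofReal_natCast (N + 1), ← ENNReal.ofReal_mul (by positivity)]
              congr 1
              push_cast
              ring
    _ = ENNReal.ofReal ((1 + C) * r) ^ n *
          ENNReal.ofReal (8 * (C * r) * ((N : ℝ) + 1)) ^ ((n + 1) * n / 2) := by
        rw [Finset.prod_const, Finset.card_univ, card_pairIdx]


end KbarAux

open KbarAux in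
/-- Haar-measure bound for `K̄_{r,C}`, expressed via the coordinate chart in which Haar
measure on `SL_{n+1}(ℝ)` agrees, up to a constant factor depending only on the dimension,
with Lebesgue measure on the region `|det g̃ - 1| < 1/2`. -/
theorem haar_measure_Kbar_upper_bound (n : ℕ) (hn : 1 ≤ n) (C : ℝ) (hC : 0 < C) :
    ∃ c : ℝ, 0 < c ∧
      ∀ r : ℝ, 0 < r → r < 1 / 2 →
        volume (slChart n '' Kbar n r C) ≤
          ENNReal.ofReal
            (c * r ^ (((n + 1) ^ 2 + (n + 1) - 4) / 2 + 1) *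
              Real.log (1 / r) ^ ((n + 1) * n / 2)) := by
  classical
  have hL2 : 0 < Real.log 2 := Real.log_pos one_lt_two
  have hlogA : 0 ≤ Real.log (C⁻¹ + 1) :=
    Real.log_nonneg (by nlinarith [inv_nonneg.mpr hC.le])
  set B : ℝ := (Real.log 2)⁻¹ + (Real.log (C⁻¹ + 1) / Real.log 2 + 2) / Real.log 2 with hBdef
  have hB : 0 < B := by positivity
  set lam : ℕ := (n + 1) * n / 2 with hlam
  refine ⟨(1 + C) ^ n * (8 * C * B) ^ lam, by positivity, ?_⟩
  intro r hr hr2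
  -- exponent bookkeeping
  obtain ⟨k, hk⟩ := Nat.even_mul_succ_self n
  have hg : (n + 1) * n = 2 * k := by rw [Nat.mul_comm]; omega
  have hE : ((n + 1) ^ 2 + (n + 1) - 4) / 2 + 1 = n + lam := by
    have h1 : (n + 1) ^ 2 + (n + 1) = 2 * k + 2 * n + 2 := by nlinarith [hg]
    rw [h1, hlam, hg]
    omega
  rw [hE]
  -- the dyadic scale
  have hcr : 0 < C * r := by positivity
  set m : ℕ := ⌈(C * r)⁻¹⌉₊ with hm
  set N : ℕ := Nat.clog 2 m with hNdef
  have hceil : ((m : ℕ) : ℝ) ≤ 2 ^ N := by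
    have := Nat.le_pow_clog one_lt_two m
    exact_mod_cast this
  have hN : 1 ≤ C * r * 2 ^ N := by
    have h1 : (C * r)⁻¹ ≤ 2 ^ N := (Nat.le_ceil _).trans hceil
    calc (1 : ℝ) = C * r * (C * r)⁻¹ := (mul_inv_cancel₀ hcr.ne').symm
      _ ≤ C * r * 2 ^ N := by
          exact mul_le_mul_of_nonneg_left h1 hcr.le
  have hr1 : (2 : ℝ) ≤ 1 / r := by
    rw [le_div_iff₀ hr]; linarith
  have hLr : Real.log 2 ≤ Real.log (1 / r) := Real.log_le_log two_pos hr1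
  have hLrpos : 0 < Real.log (1 / r) := lt_of_lt_of_le hL2 hLr
  -- bound N + 1 ≤ B * log(1/r)
  have hNB : (N : ℝ) + 1 ≤ B * Real.log (1 / r) := by
    have hm1 : 1 ≤ m := by
      rw [hm, Nat.one_le_ceil_iff]
      positivity
    rcases eq_or_lt_of_le hm1 with hm1' | hm2
    · -- m = 1, N = 0
      have : N = 0 := by rw [hNdef, ← hm1', Nat.clog_one_right]
      rw [this]
      have h1 : (1 : ℝ) ≤ (Real.log 2)⁻¹ * Real.log (1 / r) := by
        rw [← div_eq_inv_mul, le_div_iff₀ hL2]; linarith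
      have h2 : 0 ≤ (Real.log (C⁻¹ + 1) / Real.log 2 + 2) / Real.log 2 * Real.log (1 / r) := by
        positivity
      rw [hBdef]
      push_cast
      nlinarith
    · -- 2 ≤ m
      have hm2' : 2 ≤ m := hm2
      have hNpos : 1 ≤ N := by
        rw [hNdef]
        exact Nat.clog_pos one_lt_two hm2'
      have hpw : (2 : ℝ) ^ (N - 1) ≤ (m : ℝ) := by
        have h0 := Nat.pow_pred_clog_lt_self one_lt_two hm2'
        have h1 : (2 : ℕ) ^ (N - 1) < m := by
          rw [hNdef]
          simpa [Nat.pred_eq_sub_one] using h0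
        exact_mod_cast h1.le
      have hlog1 : ((N : ℝ) - 1) * Real.log 2 ≤ Real.log m := by
        have h1 : Real.log ((2 : ℝ) ^ (N - 1)) ≤ Real.log m :=
          Real.log_le_log (by positivity) hpw
        rw [Real.log_pow] at h1
        have hcast : ((N - 1 : ℕ) : ℝ) = (N : ℝ) - 1 := by
          have : 1 ≤ N := hNpos
          push_cast [Nat.cast_sub this]
          ring
        rw [hcast] at h1
        exact h1
      have hmle : (m : ℝ) ≤ (C⁻¹ + 1) * (1 / r) := by
        have h1 : (m : ℝ) < (C * r)⁻¹ + 1 := Nat.ceil_lt_add_one (by positivity)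
        have h2 : (C * r)⁻¹ = C⁻¹ * (1 / r) := by
          rw [mul_inv, one_div]
        have h3 : (1 : ℝ) ≤ 1 / r := by linarith
        calc (m : ℝ) ≤ (C * r)⁻¹ + 1 := h1.le
          _ = C⁻¹ * (1 / r) + 1 := by rw [h2]
          _ ≤ C⁻¹ * (1 / r) + 1 * (1 / r) := by
              apply add_le_add_right
              nlinarith
          _ = (C⁻¹ + 1) * (1 / r) := by ring
      have hlog2 : Real.log m ≤ Real.log (C⁻¹ + 1) + Real.log (1 / r) := by
        calc Real.log m ≤ Real.log ((C⁻¹ + 1) * (1 / r)) := by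
              apply Real.log_le_log (by exact_mod_cast Nat.lt_of_lt_of_le Nat.zero_lt_one hm1) hmle
          _ = Real.log (C⁻¹ + 1) + Real.log (1 / r) := by
              rw [Real.log_mul (by positivity) (by positivity)]
      -- N - 1 ≤ (log(C⁻¹+1) + log(1/r)) / log 2
      have hkey : (N : ℝ) - 1 ≤ (Real.log (C⁻¹ + 1) + Real.log (1 / r)) / Real.log 2 := by
        rw [le_div_iff₀ hL2]
        exact hlog1.trans hlog2
      -- conclude
      rw [hBdef]
      have hq : 1 ≤ Real.log (1 / r) / Real.log 2 := by
        rw [le_div_iff₀ hL2]; linarith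
      have expand : ((Real.log 2)⁻¹ + (Real.log (C⁻¹ + 1) / Real.log 2 + 2) / Real.log 2)
            * Real.log (1 / r)
          = Real.log (1 / r) / Real.log 2
            + (Real.log (C⁻¹ + 1) / Real.log 2 + 2) * (Real.log (1 / r) / Real.log 2) := by
        field_simp
      rw [expand]
      have h5 : Real.log (C⁻¹ + 1) / Real.log 2 + 2
          ≤ (Real.log (C⁻¹ + 1) / Real.log 2 + 2) * (Real.log (1 / r) / Real.log 2) := by
        nlinarith [div_nonneg hlogA hL2.le]
      have h6 : (N : ℝ) - 1 ≤ Real.log (C⁻¹ + 1) / Real.log 2 + Real.log (1 / r) / Real.log 2 := by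
        rw [add_div] at hkey
        exact hkey
      linarith
  clear_value B
  -- main calc
  calc volume (slChart n '' Kbar n r C)
      ≤ volume (⋃ f : PairIdx n → Fin (N + 1), Set.pi Set.univ (boxI n N r C f)) := by
        apply measure_mono
        rintro - ⟨g, hg, rfl⟩
        obtain ⟨f, hf⟩ := cover hr hC hN hg
        exact mem_iUnion.2 ⟨f, hf⟩
    _ ≤ ENNReal.ofReal ((1 + C) * r) ^ n *
        ENNReal.ofReal (8 * (C * r) * ((N : ℝ) + 1)) ^ lam := vol_bound n N r C hr hC
    _ = ENNReal.ofReal (((1 + C) * r) ^ n * (8 * (C * r) * ((N : ℝ) + 1)) ^ lam) := by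
        rw [← ENNReal.ofReal_pow (by positivity), ← ENNReal.ofReal_pow (by positivity),
          ← ENNReal.ofReal_mul (by positivity)]
    _ ≤ ENNReal.ofReal ((1 + C) ^ n * (8 * C * B) ^ lam * r ^ (n + lam) *
          Real.log (1 / r) ^ lam) := by
        apply ENNReal.ofReal_le_ofReal
        have hNNpos : (0 : ℝ) ≤ (N : ℝ) + 1 := by positivity
        set NN : ℝ := (N : ℝ) + 1 with hNNdef
        clear_value NN
        have step1 : ((1 + C) * r) ^ n * (8 * (C * r) * NN) ^ lam
            = (1 + C) ^ n * (8 * C) ^ lam * r ^ (n + lam) * NN ^ lam := by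
          rw [pow_add, mul_pow]; ring
        rw [step1]
        have step2 : NN ^ lam ≤ (B * Real.log (1 / r)) ^ lam :=
          pow_le_pow_left₀ hNNpos hNB lam
        calc (1 + C) ^ n * (8 * C) ^ lam * r ^ (n + lam) * NN ^ lam
            ≤ (1 + C) ^ n * (8 * C) ^ lam * r ^ (n + lam) * (B * Real.log (1 / r)) ^ lam := by
              apply mul_le_mul_of_nonneg_left step2 (by positivity)
          _ = (1 + C) ^ n * (8 * C * B) ^ lam * r ^ (n + lam) * Real.log (1 / r) ^ lam := by
              rw [mul_pow, mul_pow]; ring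
end

section
/- Fix d ≥ 2 and c₀ ∈ (0, 1/(3e)), and a weight-vector flow g_s = diag(e^{α₁s},…,e^{α_m s}, e^{−β₁s},…,e^{−β_n s}) with all α_i, β_j ∈ (0,1], Σα_i = Σβ_j = 1, m + n = d. Suppose Λ is a unimodular lattice in ℝ^d, r ∈ (0, c₀/d), s ∈ [r, 1), and suppose: (i) Λ has a basis b₁,…,b_d with |b_{ji}| < c₀ for j ≠ i and 1 − r/(2d) < b_{ii} < 1 for all i (where b_{ji} is the j-th coordinate of b_i); (ii) the lattice g_{−s}Λ also has such a basis, and moreover both Λ and g_{−s}Λ contain no nonzero point of (r−1, 1−r)^d. Then a contradiction follows; i.e., no such pair (Λ, s) exists. -/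
open Set

lemma col_mem_lat {d : ℕ} (g : Matrix (Fin d) (Fin d) ℝ) (i : Fin d) :
    (fun j => g j i) ∈ lat g := by
  refine ⟨Pi.single i 1, ?_⟩
  funext j
  simp [Matrix.mulVec, dotProduct, Pi.single_apply, mul_ite, dotProduct]

lemma lat_sub {d : ℕ} {g : Matrix (Fin d) (Fin d) ℝ} {v w : Fin d → ℝ}
    (hv : v ∈ lat g) (hw : w ∈ lat g) : v - w ∈ lat g := by
  obtain ⟨a, ha⟩ := hv
  obtain ⟨b, hb⟩ := hw
  refine ⟨a - b, ?_⟩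
  have : (fun i => ((a - b) i : ℝ)) = (fun i => (a i : ℝ)) - (fun i => (b i : ℝ)) := by
    funext i; simp
  rw [ha, hb, this, Matrix.mulVec_sub]

set_option maxHeartbeats 2000000 in
theorem disjointness_lemma
    (m n : ℕ) (hm : 0 < m) (hn : 0 < n) (hd : 2 ≤ m + n)
    (c₀ : ℝ) (hc₀ : c₀ ∈ Set.Ioo (0 : ℝ) (1 / (3 * Real.exp 1)))
    (α : Fin m → ℝ) (β : Fin n → ℝ)
    (hα : ∀ i, α i ∈ Set.Ioc (0 : ℝ) 1) (hβ : ∀ j, β j ∈ Set.Ioc (0 : ℝ) 1)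
    (hαs : ∑ i, α i = 1) (hβs : ∑ j, β j = 1)
    (e : Fin (m + n) → ℝ) (he : e = Fin.append α (fun j => -β j))
    (r s : ℝ) (hr : 0 < r) (hr' : r < c₀ / (m + n)) (hs : r ≤ s) (hs' : s < 1)
    (B B' : Matrix (Fin (m + n)) (Fin (m + n)) ℝ)
    (hBdet : |B.det| = 1)
    (hBoff : ∀ i j : Fin (m + n), j ≠ i → |B j i| < c₀)
    (hBdiag : ∀ i, 1 - r / (2 * (m + n)) < B i i ∧ B i i < 1)
    (hB'basis :
      lat ((Matrix.diagonal fun i => Real.exp (-(e i * s))) * B) = lat B')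
    (hB'off : ∀ i j : Fin (m + n), j ≠ i → |B' j i| < c₀)
    (hB'diag : ∀ i, 1 - r / (2 * (m + n)) < B' i i ∧ B' i i < 1)
    (hΛ : ∀ v ∈ lat B, (∀ i, v i ∈ Set.Ioo (r - 1) (1 - r)) → v = 0)
    (hΛ' : ∀ v ∈ lat B', (∀ i, v i ∈ Set.Ioo (r - 1) (1 - r)) → v = 0) :
    False := by
  obtain ⟨hc₀0, hc₀1⟩ := hc₀
  have hexp1 : (1:ℝ) < Real.exp 1 := by
    have := Real.exp_one_gt_d9; linarith
  have hexp0 : (0:ℝ) < Real.exp 1 := by linarith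
  have hc₀3 : c₀ < 1/3 := by
    have : 1 / (3 * Real.exp 1) < 1/3 := by
      apply div_lt_div_of_pos_left <;> nlinarith
    linarith
  have hec : Real.exp 1 * c₀ < 1/3 := by
    rw [lt_div_iff₀ (by positivity)] at hc₀1
    nlinarith
  have hdn : (2:ℝ) ≤ (m + n : ℕ) := by exact_mod_cast hd
  have hr2 : r < c₀ / 2 := by
    have : c₀ / ((m:ℕ) + n) ≤ c₀ / 2 := by
      apply div_le_div_of_nonneg_left (le_of_lt hc₀0) (by norm_num)
      push_cast at hdn ⊢; linarith
    push_cast at this ⊢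
    linarith
  have hr6 : r < 1/6 := by linarith
  have hspos : 0 < s := lt_of_lt_of_le hr hs
  -- choose index with large α
  have hmR : (0:ℝ) < (m:ℝ) := by exact_mod_cast hm
  obtain ⟨i₁, hi₁⟩ : ∃ i, 1/(m:ℝ) ≤ α i := by
    by_contra hcon
    push_neg at hcon
    have hne : (Finset.univ : Finset (Fin m)).Nonempty :=
      Finset.univ_nonempty_iff.mpr (Fin.pos_iff_nonempty.mp hm)
    have hlt : ∑ i : Fin m, α i < ∑ _i : Fin m, 1/(m:ℝ) :=
      Finset.sum_lt_sum_of_nonempty hne (fun i _ => hcon i)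
    rw [hαs, Finset.sum_const, Finset.card_univ, Fintype.card_fin, nsmul_eq_mul,
      mul_one_div, div_self (ne_of_gt hmR)] at hlt
    exact lt_irrefl _ hlt
  set i₀ : Fin (m + n) := Fin.castAdd n i₁ with hi₀
  have hei₀ : e i₀ = α i₁ := by rw [he, hi₀, Fin.append_left]
  have heabs : ∀ j, |e j| ≤ 1 := by
    subst he
    intro j
    refine Fin.addCases (fun i => ?_) (fun i => ?_) j
    · rw [Fin.append_left]
      exact abs_le.mpr ⟨by linarith [(hα i).1], (hα i).2⟩
    · rw [Fin.append_right]
      rw [abs_neg]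
      exact abs_le.mpr ⟨by linarith [(hβ i).1], (hβ i).2⟩
  -- the vector y = g_{-s} b_{i₀}
  set D := (Matrix.diagonal fun i => Real.exp (-(e i * s))) * B with hD
  set y : Fin (m + n) → ℝ := fun j => Real.exp (-(e j * s)) * B j i₀ with hy
  have hyD : y = fun j => D j i₀ := by
    funext j; rw [hy, hD, Matrix.diagonal_mul]
  have hy_mem : y ∈ lat B' := by
    rw [← hB'basis, hyD]; exact col_mem_lat D i₀
  have hyoff : ∀ j, j ≠ i₀ → |y j| < Real.exp 1 * c₀ := by
    intro j hj
    rw [hy, abs_mul, abs_of_pos (Real.exp_pos _)]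
    have h1 : Real.exp (-(e j * s)) < Real.exp 1 := by
      apply Real.exp_lt_exp.mpr
      have := heabs j
      have h2 : |e j * s| ≤ s := by
        rw [abs_mul, abs_of_pos hspos]
        nlinarith [abs_nonneg (e j)]
      have := neg_abs_le (e j * s)
      linarith
    have h2 := hBoff i₀ j hj
    have h3 := abs_nonneg (B j i₀)
    nlinarith [Real.exp_pos (-(e j * s))]
  have hyofflt : ∀ j, j ≠ i₀ → |y j| < 1/3 := fun j hj => lt_trans (hyoff j hj) hec
  have hBi₀ := hBdiag i₀
  have hrd : r / (2 * ((m:ℝ) + n)) < 1/2 := by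
    have : (0:ℝ) < 2 * ((m:ℝ)+n) := by push_cast at hdn; linarith
    rw [div_lt_iff₀ this]; push_cast at hdn; nlinarith
  have hBpos : 0 < B i₀ i₀ := by
    push_cast at hBi₀; linarith [hBi₀.1]
  have hyi₀pos : 0 < y i₀ := mul_pos (Real.exp_pos _) hBpos
  -- upper bound on y i₀
  have hx : r / (m:ℝ) ≤ e i₀ * s ∧ e i₀ * s ≤ 1 ∧ 0 < e i₀ * s := by
    rw [hei₀]
    have h1 := (hα i₁).1
    have h2 := (hα i₁).2
    refine ⟨?_, ?_, mul_pos h1 hspos⟩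
    · rw [div_le_iff₀ hmR]
      calc r ≤ s := hs
        _ = (1/(m:ℝ)) * s * m := by field_simp
        _ ≤ α i₁ * s * m := by
          apply mul_le_mul_of_nonneg_right _ (le_of_lt hmR)
          exact mul_le_mul_of_nonneg_right hi₁ (le_of_lt hspos)
    · nlinarith
  have hexpub : Real.exp (-(e i₀ * s)) ≤ 1 - (e i₀ * s) / 2 := by
    obtain ⟨-, hx2, hx3⟩ := hx
    set x := e i₀ * s
    have h1 : 1 + x ≤ Real.exp x := by linarith [Real.add_one_le_exp x]
    have h2 : Real.exp (-x) * Real.exp x = 1 := by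
      rw [← Real.exp_add]; simp
    nlinarith [Real.exp_pos (-x), Real.exp_pos x]
  have hyi₀lt : y i₀ < 1 - r / (2*(m:ℝ)) := by
    have h1 : Real.exp (-(e i₀ * s)) ≤ 1 - r/(2*(m:ℝ)) := by
      have h0 := hx.1
      have h3 : r ≤ e i₀ * s * m := (div_le_iff₀ hmR).mp h0
      have h4 : r/(2*(m:ℝ)) ≤ (e i₀ * s)/2 := by
        rw [div_le_div_iff₀ (by positivity) (by norm_num)]
        linarith
      linarith [hexpub]
    have h2 : 0 < Real.exp (-(e i₀ * s)) := Real.exp_pos _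
    have hyval : y i₀ = Real.exp (-(e i₀ * s)) * B i₀ i₀ := rfl
    rw [hyval]
    nlinarith [hBi₀.2]
  have hyi₀d : y i₀ < 1 - r / (2 * ((m:ℝ) + n)) := by
    have hnR : (0:ℝ) ≤ (n:ℝ) := Nat.cast_nonneg n
    have : r / (2 * ((m:ℝ) + n)) ≤ r / (2*(m:ℝ)) := by
      apply div_le_div_of_nonneg_left (le_of_lt hr) (by linarith) (by linarith)
    linarith
  -- step 1: y i₀ ≥ 1 - r
  have hy1r : 1 - r ≤ y i₀ := by
    by_contra hcon
    push_neg at hcon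
    have hcube : ∀ j, y j ∈ Set.Ioo (r - 1) (1 - r) := by
      intro j
      by_cases hj : j = i₀
      · subst hj; exact ⟨by linarith, hcon⟩
      · have := hyofflt j hj
        rw [abs_lt] at this
        constructor <;> [linarith; linarith]
    have := hΛ' y hy_mem hcube
    rw [this] at hyi₀pos
    simp at hyi₀pos
  -- step 2: z = b'_{i₀} - y is a nonzero lattice point in the cube
  set z : Fin (m+n) → ℝ := (fun j => B' j i₀) - y with hz
  have hz_mem : z ∈ lat B' := lat_sub (col_mem_lat B' i₀) hy_mem
  have hzi₀ : 0 < z i₀ := by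
    have := (hB'diag i₀).1
    push_cast at this
    simp only [hz, Pi.sub_apply]
    linarith
  have hzcube : ∀ j, z j ∈ Set.Ioo (r - 1) (1 - r) := by
    intro j
    rcases eq_or_ne j i₀ with hj | hj
    · rw [hj]
      have h1 := (hB'diag i₀).2
      have h2 := (hB'diag i₀).1
      have hzval : z i₀ = B' i₀ i₀ - y i₀ := rfl
      rw [hzval, Set.mem_Ioo]
      constructor
      · linarith [hyi₀d]
      · linarith [hy1r]
    · have h1 := hB'off i₀ j hj
      have h2 := hyofflt j hj
      rw [abs_lt] at h1 h2
      have hzval : z j = B' j i₀ - y j := rfl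
      rw [hzval, Set.mem_Ioo]
      constructor <;> linarith
  have := hΛ' z hz_mem hzcube
  rw [this] at hzi₀
  simp at hzi₀
end

section
/- Let d ≥ 2 and let S_{d−1} be the symmetric group on {1,…,d−1}. Suppose (b_{ij})_{1≤i,j≤d−1} is a real matrix with |b_{ij}| < 1 for all i, j, satisfying the ordering property |b_{i'j'}| ≤ |b_{ij}| whenever i' ≤ i, j' ≤ j, i' > j', i > j (off-diagonal below-diagonal comparisons), and |b_{ij}·b_{ji}| < r/d! for all 1 ≤ j < i ≤ d−1, for some r > 0. Then Σ_{σ ∈ S_{d−1}, σ ≠ id} ∏_{i=1}^{d−1} |b_{σ(i)i}| < r/d, and consequently |det(b_{ij}) − ∏_{i=1}^{d−1} b_{ii}| < r/d. -/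
open Set

theorem permanent_off_diagonal_bound
    (d : ℕ) (hd : 2 ≤ d) (r : ℝ) (hr : 0 < r)
    (b : Matrix (Fin (d - 1)) (Fin (d - 1)) ℝ)
    (hb1 : ∀ i j, |b i j| < 1)
    (horder : ∀ i' j' i j : Fin (d - 1),
      j' < i' → j < i → i' ≤ i → j' ≤ j → |b i' j'| ≤ |b i j|)
    (hsmall : ∀ i j : Fin (d - 1), j < i → |b i j * b j i| < r / (Nat.factorial d)) :
    (∑ σ ∈ Finset.univ.erase (1 : Equiv.Perm (Fin (d - 1))), ∏ i, |b (σ i) i|) < r / d ∧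
    |b.det - ∏ i, b i i| < r / d := by
  classical
  have key : ∀ σ : Equiv.Perm (Fin (d - 1)), σ ≠ 1 →
      ∏ i, |b (σ i) i| < r / (Nat.factorial d) := by
    intro σ hσ
    have hsupp : σ.support.Nonempty := by
      rw [Finset.nonempty_iff_ne_empty]; simp [Equiv.Perm.support_eq_empty_iff, hσ]
    set m := σ.support.min' hsupp with hm
    set I := σ.support.max' hsupp with hI
    have hmI : m ∈ σ.support := Finset.min'_mem _ _
    have hII : I ∈ σ.support := Finset.max'_mem _ _
    have hσm : σ m ∈ σ.support := Equiv.Perm.apply_mem_support.2 hmI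
    have hσI : σ I ∈ σ.support := Equiv.Perm.apply_mem_support.2 hII
    have hm_lt : m < σ m :=
      lt_of_le_of_ne (Finset.min'_le _ _ hσm) (Ne.symm (Equiv.Perm.mem_support.1 hmI))
    have hI_gt : σ I < I :=
      lt_of_le_of_ne (Finset.le_max' _ _ hσI) (Equiv.Perm.mem_support.1 hII)
    have hmIlt : m < I := lt_of_lt_of_le hm_lt (Finset.le_max' _ _ hσm)
    have hne : m ≠ I := ne_of_lt hmIlt
    have h2 : ∏ i, |b (σ i) i| ≤ |b (σ m) m| * |b (σ I) I| := by
      have hsub : ({m, I} : Finset (Fin (d - 1))) ⊆ Finset.univ := Finset.subset_univ _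
      rw [← Finset.prod_sdiff hsub, Finset.prod_pair hne]
      have hrest : ∏ i ∈ Finset.univ \ {m, I}, |b (σ i) i| ≤ 1 :=
        Finset.prod_le_one (fun i _ => abs_nonneg _) (fun i _ => le_of_lt (hb1 _ _))
      exact mul_le_of_le_one_left (mul_nonneg (abs_nonneg _) (abs_nonneg _)) hrest
    have h3 : |b (σ m) m| ≤ |b I (σ I)| :=
      horder (σ m) m I (σ I) hm_lt hI_gt (Finset.le_max' _ _ hσm) (Finset.min'_le _ _ hσI)
    calc ∏ i, |b (σ i) i| ≤ |b (σ m) m| * |b (σ I) I| := h2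
      _ ≤ |b I (σ I)| * |b (σ I) I| := mul_le_mul_of_nonneg_right h3 (abs_nonneg _)
      _ = |b I (σ I) * b (σ I) I| := (abs_mul _ _).symm
      _ < r / (Nat.factorial d) := hsmall I (σ I) hI_gt
  have hd0 : (0 : ℝ) < (d : ℝ) := by positivity
  have hfac : (Nat.factorial d : ℝ) = (d : ℝ) * Nat.factorial (d - 1) := by
    rw [← Nat.mul_factorial_pred (by omega : d ≠ 0)]
    push_cast
    ring
  have hfin : ((d : ℝ)) * (Nat.factorial (d - 1)) * (r / (Nat.factorial d)) = r := by
    rw [hfac]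
    field_simp
  have hbound : ((Nat.factorial (d - 1) : ℝ)) * (r / (Nat.factorial d)) = r / d := by
    rw [eq_div_iff (ne_of_gt hd0)]
    nlinarith [hfin]
  have hsum : (∑ σ ∈ Finset.univ.erase (1 : Equiv.Perm (Fin (d - 1))), ∏ i, |b (σ i) i|)
      < r / d := by
    by_cases hS : (Finset.univ.erase (1 : Equiv.Perm (Fin (d - 1)))).Nonempty
    · have h1 : (∑ σ ∈ Finset.univ.erase (1 : Equiv.Perm (Fin (d - 1))), ∏ i, |b (σ i) i|)
          < ∑ _σ ∈ Finset.univ.erase (1 : Equiv.Perm (Fin (d - 1))), r / (Nat.factorial d) :=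
        Finset.sum_lt_sum_of_nonempty hS fun σ hσ => key σ (Finset.ne_of_mem_erase hσ)
      have hcard : ((Finset.univ.erase (1 : Equiv.Perm (Fin (d - 1)))).card : ℝ)
          ≤ (Nat.factorial (d - 1) : ℝ) := by
        have : (Finset.univ.erase (1 : Equiv.Perm (Fin (d - 1)))).card
            ≤ Fintype.card (Equiv.Perm (Fin (d - 1))) :=
          Finset.card_le_card (Finset.subset_univ _)
        have hc : Fintype.card (Equiv.Perm (Fin (d - 1))) = Nat.factorial (d - 1) := by
          rw [Fintype.card_perm, Fintype.card_fin]
        exact_mod_cast hc ▸ this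
      have h2 : (∑ _σ ∈ Finset.univ.erase (1 : Equiv.Perm (Fin (d - 1))), r / (Nat.factorial d))
          ≤ r / d := by
        rw [Finset.sum_const, nsmul_eq_mul, ← hbound]
        have hpos : (0 : ℝ) < r / (Nat.factorial d) := by positivity
        exact mul_le_mul_of_nonneg_right hcard (le_of_lt hpos)
      linarith
    · rw [Finset.not_nonempty_iff_eq_empty.1 hS, Finset.sum_empty]
      positivity
  refine ⟨hsum, ?_⟩
  have hdet : b.det - ∏ i, b i i
      = ∑ σ ∈ Finset.univ.erase (1 : Equiv.Perm (Fin (d - 1))),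
          ((Equiv.Perm.sign σ : ℤ) : ℝ) * ∏ i, b (σ i) i := by
    rw [Matrix.det_apply', ← Finset.add_sum_erase _ _ (Finset.mem_univ (1 : Equiv.Perm (Fin (d - 1))))]
    simp [Equiv.Perm.sign_one]
  rw [hdet]
  calc |∑ σ ∈ Finset.univ.erase (1 : Equiv.Perm (Fin (d - 1))),
          ((Equiv.Perm.sign σ : ℤ) : ℝ) * ∏ i, b (σ i) i|
      ≤ ∑ σ ∈ Finset.univ.erase (1 : Equiv.Perm (Fin (d - 1))),
          |((Equiv.Perm.sign σ : ℤ) : ℝ) * ∏ i, b (σ i) i| :=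
        Finset.abs_sum_le_sum_abs _ _
    _ = ∑ σ ∈ Finset.univ.erase (1 : Equiv.Perm (Fin (d - 1))), ∏ i, |b (σ i) i| := by
        refine Finset.sum_congr rfl fun σ _ => ?_
        rw [abs_mul, Finset.abs_prod]
        rcases Int.units_eq_one_or (Equiv.Perm.sign σ) with h | h <;> simp [h]
    _ < r / d := hsum
end
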